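/- arXiv:1307.5188 — 7 statements merged into one kernel-verified Lean document; each statement's English description precedes it below -/
import Mathlib

section
/- For every integer k and every integer n ≥ 1, the poly-Cauchy polynomial of the first kind satisfies C_n^(k)(x) = Σ_{l=0}^{n-1} Σ_{l_1+⋯+l_n=l} ( (n-1)! / (l_1!⋯l_n!(n-1-l)!) ) · B_{l_1}⋯B_{l_n} / (n-l+1)^k + Σ_{j=1}^{n} { Σ_{l=0}^{n-j} Σ_{l_1+⋯+l_n=l} (-1)^j ( (n-1)! / (l_1!⋯l_n!(n-1-l)!) ) · C(n-l, j) · B_{l_1}⋯B_{l_n} / (n-l-j+1)^k } x^j, where the inner sums range over n-tuples of nonnegative integers l_1,…,l_n summing to l. -/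
open PowerSeries Finset

/-- Composition `F(G(t))` of formal power series (intended for `G` with zero
constant term, in which case `coeff n (G ^ m) = 0` for `m > n` and the finite
sum below computes the usual composition). -/
noncomputable def psComp (F G : PowerSeries ℝ) : PowerSeries ℝ :=
  PowerSeries.mk fun n => ∑ m ∈ Finset.range (n + 1),
    (PowerSeries.coeff m F) * (PowerSeries.coeff n (G ^ m))

/-- The formal power series of `log (1 + t)`. -/
noncomputable def logSeries : PowerSeries ℝ :=
  PowerSeries.mk fun n => if n = 0 then 0 else (-1) ^ (n + 1) / n

/-- The polylogarithm factorial function `Lif_k(t) = ∑_{m ≥ 0} t^m / (m! (m+1)^k)`. -/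
noncomputable def Lif (k : ℤ) : PowerSeries ℝ :=
  PowerSeries.mk fun m => 1 / ((m.factorial : ℝ) * ((m : ℝ) + 1) ^ k)

/-- The poly-Cauchy polynomial of the first kind `C_n^{(k)}(x)`, defined by
`Lif_k(log(1+t)) / (1+t)^x = ∑_{n ≥ 0} C_n^{(k)}(x) t^n / n!`, where
`(1+t)^{-x} = exp (-x · log (1+t))`. -/
noncomputable def polyCauchy (k : ℤ) (n : ℕ) (x : ℝ) : ℝ :=
  (n.factorial : ℝ) * PowerSeries.coeff n
    (psComp (Lif k) logSeries *
      psComp (PowerSeries.rescale (-x) (PowerSeries.exp ℝ)) logSeries)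

/-- The (signed) Stirling numbers of the first kind `S₁(l, m)`, defined by
`(log (1+t))^m = m! ∑_{l ≥ m} S₁(l,m) t^l / l!`. -/
noncomputable def S1 (l m : ℕ) : ℝ :=
  (l.factorial : ℝ) / (m.factorial : ℝ) * PowerSeries.coeff l (logSeries ^ m)

/-- The ordinary Bernoulli numbers, via `t/(e^t - 1) = ∑ B_n t^n/n!`;
here `(mk fun m => 1/(m+1)!)` is the series `(e^t - 1)/t`. -/
noncomputable def Bern (n : ℕ) : ℝ :=
  (n.factorial : ℝ) * PowerSeries.coeff n
    (PowerSeries.mk fun m => (1 : ℝ) / (m + 1).factorial)⁻¹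

/-- The Bernoulli polynomial of order `r`, via `(t/(e^t-1))^r e^{xt} = ∑ B_n^{(r)}(x) t^n/n!`. -/
noncomputable def bernPoly (r : ℕ) (n : ℕ) (x : ℝ) : ℝ :=
  (n.factorial : ℝ) * PowerSeries.coeff n
    (((PowerSeries.mk fun m => (1 : ℝ) / (m + 1).factorial)⁻¹) ^ r *
      PowerSeries.rescale x (PowerSeries.exp ℝ))

/-- The series `log(1+t)/t`, so that `t / log(1+t) = Dlog⁻¹`. -/
noncomputable def Dlog : PowerSeries ℝ :=
  PowerSeries.mk fun n => (-1) ^ n / ((n : ℝ) + 1)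

/-- The Cauchy numbers of the first kind, via `t/log(1+t) = ∑ C_n t^n/n!`. -/
noncomputable def cauchyNum (n : ℕ) : ℝ :=
  (n.factorial : ℝ) * PowerSeries.coeff n Dlog⁻¹

/-- The numbers `T_n^{(r,k)}`, via
`(t/log(1+t))^r · Lif_k(log(1+t)) = ∑ T_n^{(r,k)} t^n/n!`. -/
noncomputable def T (r : ℕ) (k : ℤ) (n : ℕ) : ℝ :=
  (n.factorial : ℝ) * PowerSeries.coeff n (Dlog⁻¹ ^ r * psComp (Lif k) logSeries)

/-- The rising factorial `x^{(m)} = x (x+1) ⋯ (x+m-1)`. -/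
noncomputable def risingFactorial (x : ℝ) (m : ℕ) : ℝ :=
  ∏ i ∈ Finset.range m, (x + i)

/-- Carlitz's polynomials `β_n^{(r)}(x)`, via `(t/log(1+t))^r (1+t)^x = ∑ β_n^{(r)}(x) t^n/n!`,
where `(1+t)^x = exp (x log (1+t))`. -/
noncomputable def carlitz (r : ℕ) (n : ℕ) (x : ℝ) : ℝ :=
  (n.factorial : ℝ) * PowerSeries.coeff n
    (Dlog⁻¹ ^ r * psComp (PowerSeries.rescale x (PowerSeries.exp ℝ)) logSeries)

noncomputable def Ee : PowerSeries ℝ := PowerSeries.mk fun m => (1 : ℝ) / (m + 1).factorial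
noncomputable def Gg : PowerSeries ℝ := Ee⁻¹

lemma PC_constCoeff_L : constantCoeff logSeries = 0 := by
  simp [logSeries, ← coeff_zero_eq_constantCoeff]

lemma PC_coeff_one_L : coeff 1 logSeries = 1 := by
  simp [logSeries]

lemma PC_L_pow_lt {m l : ℕ} (h : l < m) : coeff l (logSeries ^ m) = 0 := by
  obtain ⟨ψ, hψ⟩ := PowerSeries.X_dvd_iff.mpr PC_constCoeff_L
  have h2 : logSeries ^ m = ψ ^ m * X ^ m := by rw [hψ]; ring
  rw [h2, coeff_mul_X_pow', if_neg (by omega)]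

lemma PC_deriv_L : d⁄dX ℝ logSeries = PowerSeries.mk fun n => (-1 : ℝ) ^ n := by
  ext n
  rw [coeff_derivative]
  simp only [logSeries, coeff_mk, if_neg (Nat.succ_ne_zero n)]
  have : ((n : ℝ) + 1) ≠ 0 := by positivity
  field_simp
  push_cast; ring

lemma PC_L_ODE : (1 + X) * d⁄dX ℝ logSeries = 1 := by
  rw [PC_deriv_L]
  ext n
  have : (1 + (X : PowerSeries ℝ)) * PowerSeries.mk (fun n => (-1 : ℝ) ^ n)
      = PowerSeries.mk (fun n => (-1 : ℝ) ^ n) + PowerSeries.mk (fun n => (-1 : ℝ) ^ n) * X ^ 1 := by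
    ring
  rw [this, map_add, coeff_mul_X_pow', coeff_mk]
  rcases n with _ | n
  · simp
  · rw [if_pos (by omega), coeff_mk, coeff_one, if_neg (Nat.succ_ne_zero n)]
    simp [pow_succ]

lemma PC_constCoeff_E : constantCoeff Ee = 1 := by
  simp [Ee, ← coeff_zero_eq_constantCoeff]

lemma PC_EG : Ee * Gg = 1 :=
  PowerSeries.mul_inv_cancel _ (by rw [PC_constCoeff_E]; exact one_ne_zero)

lemma PC_constCoeff_G : constantCoeff Gg = 1 := by
  rw [Gg, PowerSeries.constantCoeff_inv, PC_constCoeff_E, inv_one]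

lemma PC_E_ODE : X * d⁄dX ℝ Ee = 1 + X * Ee - Ee := by
  ext n
  have hX : ∀ φ : PowerSeries ℝ, X * φ = φ * X ^ 1 := fun φ => by ring
  rw [map_sub, map_add, hX (d⁄dX ℝ Ee), hX Ee, coeff_mul_X_pow', coeff_mul_X_pow']
  rcases n with _ | n
  · simp [Ee, ← coeff_zero_eq_constantCoeff]
  · rw [if_pos (by omega), if_pos (by omega), coeff_derivative, coeff_one,
      if_neg (Nat.succ_ne_zero n)]
    simp only [Nat.add_sub_cancel, Ee, coeff_mk]
    have h1 : ((n + 1 + 1).factorial : ℝ) = (n + 2) * (n + 1).factorial := by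
      rw [show n + 1 + 1 = n + 2 from rfl, Nat.factorial_succ]; push_cast; ring
    have h2 : ((n + 1).factorial : ℝ) ≠ 0 := Nat.cast_ne_zero.mpr (Nat.factorial_ne_zero _)
    rw [h1]
    field_simp
    ring

lemma PC_G_ODE : X * d⁄dX ℝ Gg = Gg - X * Gg - Gg ^ 2 := by
  have hpow : Ee * Gg ^ 2 = Gg := by rw [pow_two, ← mul_assoc, PC_EG, one_mul]
  have hd : d⁄dX ℝ Gg = -Gg ^ 2 * d⁄dX ℝ Ee := by
    rw [Gg, PowerSeries.derivative_inv']
  calc X * d⁄dX ℝ Gg = -Gg ^ 2 * (X * d⁄dX ℝ Ee) := by rw [hd]; ring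
    _ = -Gg ^ 2 * (1 + X * Ee - Ee) := by rw [PC_E_ODE]
    _ = Ee * Gg ^ 2 - X * (Ee * Gg ^ 2) - Gg ^ 2 := by ring
    _ = Gg - X * Gg - Gg ^ 2 := by rw [hpow]

lemma PC_Gpow_ODE (n : ℕ) (hn : 1 ≤ n) :
    X * d⁄dX ℝ (Gg ^ n) = n • (Gg ^ n - X * Gg ^ n - Gg ^ (n + 1)) := by
  have e1 : Gg ^ (n-1) * Gg = Gg ^ n := by rw [← pow_succ]; congr 1; omega
  have e2 : Gg ^ (n-1) * Gg ^ 2 = Gg ^ (n+1) := by rw [← pow_add]; congr 1; omega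
  rw [Derivation.leibniz_pow, smul_eq_mul, mul_smul_comm]
  congr 1
  calc X * (Gg ^ (n-1) * d⁄dX ℝ Gg) = Gg ^ (n-1) * (X * d⁄dX ℝ Gg) := by ring
    _ = Gg ^ (n-1) * (Gg - X * Gg - Gg ^ 2) := by rw [PC_G_ODE]
    _ = Gg ^ (n-1) * Gg - X * (Gg ^ (n-1) * Gg) - Gg ^ (n-1) * Gg ^ 2 := by ring
    _ = Gg ^ n - X * Gg ^ n - Gg ^ (n+1) := by rw [e1, e2]

lemma PC_norlund {n l : ℕ} (hn : 1 ≤ n) (hl : 1 ≤ l) :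
    (n : ℝ) * coeff l (Gg ^ (n + 1)) =
      ((n : ℝ) - l) * coeff l (Gg ^ n) - n * coeff (l - 1) (Gg ^ n) := by
  have h := congrArg (coeff l) (PC_Gpow_ODE n hn)
  rw [show (X : PowerSeries ℝ) * d⁄dX ℝ (Gg ^ n) = d⁄dX ℝ (Gg ^ n) * X ^ 1 by ring,
    coeff_mul_X_pow', if_pos hl, coeff_derivative, map_nsmul, map_sub, map_sub,
    show (X : PowerSeries ℝ) * Gg ^ n = Gg ^ n * X ^ 1 by ring,
    coeff_mul_X_pow', if_pos hl, show l - 1 + 1 = l by omega] at h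
  have hc : ((l - 1 : ℕ) : ℝ) = (l : ℝ) - 1 := by
    push_cast [Nat.cast_sub hl]; ring
  rw [hc, nsmul_eq_mul] at h
  linear_combination h

lemma PC_Lrec (m N : ℕ) (hN : 1 ≤ N) :
    ((N : ℝ) + 1) * coeff (N + 1) (logSeries ^ m) + (N : ℝ) * coeff N (logSeries ^ m)
      = (m : ℝ) * coeff N (logSeries ^ (m - 1)) := by
  have key : (1 + X) * d⁄dX ℝ (logSeries ^ m) = m • logSeries ^ (m - 1) := by
    rw [Derivation.leibniz_pow, smul_eq_mul, mul_smul_comm]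
    congr 1
    calc (1 + X) * (logSeries ^ (m-1) * d⁄dX ℝ logSeries)
        = logSeries ^ (m-1) * ((1 + X) * d⁄dX ℝ logSeries) := by ring
      _ = logSeries ^ (m-1) := by rw [PC_L_ODE, mul_one]
  have h := congrArg (coeff N) key
  rw [add_mul, one_mul, map_add,
    show (X : PowerSeries ℝ) * d⁄dX ℝ (logSeries ^ m) = d⁄dX ℝ (logSeries ^ m) * X ^ 1 by ring,
    coeff_mul_X_pow', if_pos hN, coeff_derivative, coeff_derivative, map_nsmul,
    show N - 1 + 1 = N by omega, nsmul_eq_mul] at h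
  have hc : ((N - 1 : ℕ) : ℝ) = (N : ℝ) - 1 := by push_cast [Nat.cast_sub hN]; ring
  rw [hc] at h
  linear_combination h

lemma PC_L_diag : ∀ n : ℕ, coeff n (logSeries ^ n) = 1
  | 0 => by simp
  | (n+1) => by
    rw [pow_succ', coeff_mul, Finset.sum_eq_single (1, n)]
    · rw [PC_coeff_one_L, PC_L_diag n, one_mul]
    · rintro ⟨a, b⟩ hab hne
      rw [Finset.HasAntidiagonal.mem_antidiagonal] at hab
      rcases lt_trichotomy b n with h | h | h
      · rw [PC_L_pow_lt h, mul_zero]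
      · exfalso; apply hne; subst h
        have : a = 1 := by omega
        subst this; rfl
      · have ha : a = 0 := by omega
        subst ha
        rw [coeff_zero_eq_constantCoeff, PC_constCoeff_L, zero_mul]
    · intro h
      exact absurd (Finset.HasAntidiagonal.mem_antidiagonal.mpr (by omega)) h

lemma PC_G_pow_zero (n : ℕ) : coeff 0 (Gg ^ n) = 1 := by
  rw [coeff_zero_eq_constantCoeff, map_pow, PC_constCoeff_G, one_pow]

lemma PC_lagrange : ∀ n m : ℕ, 1 ≤ m → m ≤ n →
    (n : ℝ) * coeff n (logSeries ^ m) = (m : ℝ) * coeff (n - m) (Gg ^ n) := by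
  intro n
  induction n with
  | zero => intro m h1 h2; omega
  | succ n ih =>
    intro m hm hmn
    rcases eq_or_lt_of_le hmn with heq | hlt
    · rw [heq, PC_L_diag, Nat.sub_self, PC_G_pow_zero]
    · have hmn' : m ≤ n := by omega
      have hn1 : 1 ≤ n := le_trans hm hmn'
      have hne : (n : ℝ) ≠ 0 := by positivity
      have hrec := PC_Lrec m n hn1
      apply mul_left_cancel₀ hne
      rcases eq_or_lt_of_le hm with h1 | h2
      · -- m = 1
        subst h1  -- h1 : 1 = m
        have hz : coeff n (logSeries ^ (1 - 1)) = 0 := by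
          simp only [Nat.sub_self, pow_zero, coeff_one, if_neg (by omega : n ≠ 0)]
        rw [hz, mul_zero] at hrec
        have ih1 := ih 1 le_rfl hn1
        have hnr := PC_norlund (n := n) (l := n) hn1 hn1
        rw [show n - 1 = n - 1 from rfl] at hnr
        rw [show n + 1 - 1 = n by omega]
        push_cast
        linear_combination (n : ℝ) * hrec - (n : ℝ) * ih1 - hnr
      · -- 2 ≤ m
        have hm2 : 2 ≤ m := h2
        have ihm := ih m hm hmn'
        have ihm1 := ih (m - 1) (by omega) (by omega)
        rw [show n - (m - 1) = n + 1 - m by omega] at ihm1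
        have hcm : ((m - 1 : ℕ) : ℝ) = (m : ℝ) - 1 := by
          push_cast [Nat.cast_sub hm]; ring
        rw [hcm] at ihm1
        have hnr := PC_norlund (n := n) (l := n + 1 - m) hn1 (by omega)
        rw [show n + 1 - m - 1 = n - m by omega] at hnr
        have hcl : ((n + 1 - m : ℕ) : ℝ) = (n : ℝ) + 1 - m := by
          push_cast [Nat.cast_sub (by omega : m ≤ n + 1)]; ring
        rw [hcl] at hnr
        push_cast
        linear_combination (n : ℝ) * hrec - (n : ℝ) * ihm + (m : ℝ) * ihm1 - (m : ℝ) * hnr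

lemma PC_coeff_pow_tuple (N l : ℕ) (φ : PowerSeries ℝ) :
    coeff l (φ ^ N) = ∑ f ∈ Finset.Nat.antidiagonalTuple N l, ∏ i, coeff (f i) φ := by
  rw [PowerSeries.coeff_pow]
  refine Finset.sum_nbij' (fun f => fun i : Fin N => f i)
    (fun g => Finsupp.onFinset (range N) (fun i => if h : i < N then g ⟨i, h⟩ else 0)
      (fun i hi => by rw [Finset.mem_range]; by_contra hc; exact hi (dif_neg (by omega))))
    ?_ ?_ ?_ ?_ ?_
  · intro f hf
    rw [Finset.mem_finsuppAntidiag] at hf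
    rw [Finset.Nat.mem_antidiagonalTuple, ← hf.1]
    exact Fin.sum_univ_eq_sum_range (fun i => f i) N
  · intro g hg
    rw [Finset.Nat.mem_antidiagonalTuple] at hg
    rw [Finset.mem_finsuppAntidiag]
    refine ⟨?_, Finsupp.support_onFinset_subset⟩
    rw [show ((range N).sum fun i => (Finsupp.onFinset (range N)
        (fun i => if h : i < N then g ⟨i, h⟩ else 0) _) i)
      = ∑ i ∈ range N, (fun i => if h : i < N then g ⟨i, h⟩ else 0) i from rfl,
      ← Fin.sum_univ_eq_sum_range (fun i => if h : i < N then g ⟨i, h⟩ else 0) N, ← hg]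
    exact Finset.sum_congr rfl fun i _ => dif_pos i.isLt
  · intro f hf
    rw [Finset.mem_finsuppAntidiag] at hf
    ext m
    simp only [Finsupp.onFinset_apply]
    by_cases h : m < N
    · rw [dif_pos h]
    · rw [dif_neg h]
      by_contra hc
      have := hf.2 (Finsupp.mem_support_iff.mpr (Ne.symm hc))
      rw [Finset.mem_range] at this
      omega
  · intro g hg
    funext i
    exact dif_pos i.isLt
  · intro f hf
    exact (Fin.prod_univ_eq_prod_range (fun i => coeff (f i) φ) N).symm


lemma PC_lagrange' {n m : ℕ} (hn : 1 ≤ n) (hm : m ≤ n) :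
    coeff n (logSeries ^ m) = (m : ℝ) / n * coeff (n - m) (Gg ^ n) := by
  rcases Nat.eq_zero_or_pos m with h | h
  · subst h
    simp only [pow_zero, coeff_one, if_neg (by omega : ¬ n = 0), Nat.cast_zero, zero_div, zero_mul]
  · have h2 := PC_lagrange n m h hm
    have hne : (n : ℝ) ≠ 0 := by positivity
    field_simp
    linear_combination h2

lemma PC_coeff_psComp_mul (F H : PowerSeries ℝ) (n : ℕ) :
    coeff n (psComp F logSeries * psComp H logSeries) =
      ∑ i ∈ range (n + 1), ∑ j ∈ range (n + 1),
        coeff i F * coeff j H * coeff n (logSeries ^ (i + j)) := by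
  set FF : PowerSeries ℝ := ∑ i ∈ range (n + 1), C (coeff i F) * logSeries ^ i with hFF
  set HH : PowerSeries ℝ := ∑ i ∈ range (n + 1), C (coeff i H) * logSeries ^ i with hHH
  have key : ∀ (P : PowerSeries ℝ) (d : ℕ), d ≤ n → coeff d (psComp P logSeries)
      = coeff d (∑ i ∈ range (n + 1), C (coeff i P) * logSeries ^ i) := by
    intro P d hd
    rw [psComp, coeff_mk, map_sum]
    simp only [coeff_C_mul]
    apply Finset.sum_subset (by intro i hi; rw [Finset.mem_range] at *; omega)
    intro i _ hi
    rw [Finset.mem_range, not_lt] at hi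
    rw [PC_L_pow_lt (by omega), mul_zero]
  have step1 : coeff n (psComp F logSeries * psComp H logSeries) = coeff n (FF * HH) := by
    rw [coeff_mul, coeff_mul]
    apply Finset.sum_congr rfl
    rintro ⟨a, b⟩ hab
    rw [Finset.HasAntidiagonal.mem_antidiagonal] at hab
    rw [key F a (by omega), key H b (by omega)]
  rw [step1, hFF, hHH, Finset.sum_mul_sum]
  rw [map_sum]
  apply Finset.sum_congr rfl
  intro i _
  rw [map_sum]
  apply Finset.sum_congr rfl
  intro j _
  rw [mul_mul_mul_comm, ← map_mul, ← pow_add, coeff_C_mul]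


lemma PC_core_tuple (N l : ℕ) :
    ∑ f ∈ Finset.Nat.antidiagonalTuple N l,
      (∏ i, ((f i).factorial : ℝ))⁻¹ * ∏ i, Bern (f i) = coeff l (Gg ^ N) := by
  rw [PC_coeff_pow_tuple]
  apply Finset.sum_congr rfl
  intro f _
  have hB : ∀ i : Fin N, Bern (f i) = ((f i).factorial : ℝ) * coeff (f i) Gg := fun i => rfl
  rw [Finset.prod_congr rfl fun i _ => hB i, Finset.prod_mul_distrib, ← mul_assoc,
    inv_mul_cancel₀, one_mul]
  apply Finset.prod_ne_zero_iff.mpr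
  intro i _
  exact Nat.cast_ne_zero.mpr (Nat.factorial_ne_zero _)


/-- Theorem 1 of the paper. -/
theorem polyCauchy_eq_bernoulli_multinomial_sum (k : ℤ) (n : ℕ) (hn : 1 ≤ n) (x : ℝ) :
    polyCauchy k n x =
      (∑ l ∈ Finset.range n, ∑ f ∈ Finset.Nat.antidiagonalTuple n l,
        ((n - 1).factorial : ℝ) /
            ((∏ i, ((f i).factorial : ℝ)) * ((n - 1 - l).factorial : ℝ)) *
          (∏ i, Bern (f i)) / ((n : ℝ) - l + 1) ^ k) +
      ∑ j ∈ Finset.Icc 1 n,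
        (∑ l ∈ Finset.range (n - j + 1), ∑ f ∈ Finset.Nat.antidiagonalTuple n l,
          (-1 : ℝ) ^ j *
            (((n - 1).factorial : ℝ) /
              ((∏ i, ((f i).factorial : ℝ)) * ((n - 1 - l).factorial : ℝ))) *
            ((n - l).choose j : ℝ) *
            (∏ i, Bern (f i)) / ((n : ℝ) - l - j + 1) ^ k) * x ^ j := by
  have hn0 : (n : ℝ) ≠ 0 := Nat.cast_ne_zero.mpr (by omega)
  have hnf : (n.factorial : ℝ) = (n : ℝ) * ((n - 1).factorial : ℝ) := by
    have h := Nat.factorial_succ (n - 1)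
    rw [show n - 1 + 1 = n from by omega] at h
    exact_mod_cast congrArg (Nat.cast : ℕ → ℝ) h
  -- coefficient evaluations
  have hf : ∀ i : ℕ, coeff i (Lif k) = 1 / ((i.factorial : ℝ) * ((i : ℝ) + 1) ^ k) :=
    fun i => by simp [Lif]
  have hh : ∀ j : ℕ, coeff j (PowerSeries.rescale (-x) (PowerSeries.exp ℝ))
      = (-x) ^ j / (j.factorial : ℝ) := fun j => by
    rw [coeff_rescale, PowerSeries.coeff_exp, map_div₀, map_one, map_natCast, mul_one_div]
  -- step 1 : coefficient of the product of compositions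
  have step1 : polyCauchy k n x = (n.factorial : ℝ) *
      ∑ j ∈ range (n + 1), ∑ i ∈ range (n + 1),
        coeff i (Lif k) * coeff j (PowerSeries.rescale (-x) (PowerSeries.exp ℝ)) *
          coeff n (logSeries ^ (i + j)) := by
    rw [polyCauchy, PC_coeff_psComp_mul, Finset.sum_comm]
  rw [step1]
  -- step 2 : inner sum evaluation
  have inner : ∀ j ∈ range (n + 1), (∑ i ∈ range (n + 1),
      coeff i (Lif k) * coeff j (PowerSeries.rescale (-x) (PowerSeries.exp ℝ)) *
        coeff n (logSeries ^ (i + j)))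
      = ((-x) ^ j / (j.factorial : ℝ)) * ∑ l ∈ range (n + 1 - j),
          ((n - l : ℕ) : ℝ) / n *
            (1 / (((n - l - j).factorial : ℝ) * (((n - l - j : ℕ) : ℝ) + 1) ^ k)) *
            coeff l (Gg ^ n) := by
    intro j hj
    rw [Finset.mem_range] at hj
    have hjn : j ≤ n := by omega
    rw [Finset.mul_sum,
      ← Finset.sum_subset (Finset.range_subset_range.mpr (by omega : n + 1 - j ≤ n + 1))
        (fun i _ hi => by
          rw [Finset.mem_range, not_lt] at hi
          rw [PC_L_pow_lt (by omega : n < i + j), mul_zero]),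
      ← Finset.sum_range_reflect]
    apply Finset.sum_congr rfl
    intro l hl
    rw [Finset.mem_range] at hl
    rw [show n + 1 - j - 1 - l = n - l - j from by omega, hf, hh,
      show n - l - j + j = n - l from by omega,
      PC_lagrange' (by omega) (by omega : n - l ≤ n),
      show n - (n - l) = l from by omega]
    ring
  rw [Finset.sum_congr rfl inner]
  -- step 3 : split j = 0
  rw [show range (n + 1) = insert 0 (Finset.Icc 1 n) from by
      ext a; simp only [Finset.mem_range, Finset.mem_insert, Finset.mem_Icc]; omega,
    Finset.sum_insert (by simp), mul_add]
  congr 1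
  · -- j = 0 chunk
    have tup1 : ∀ l : ℕ, (∑ f ∈ Finset.Nat.antidiagonalTuple n l,
        ((n - 1).factorial : ℝ) /
            ((∏ i, ((f i).factorial : ℝ)) * ((n - 1 - l).factorial : ℝ)) *
          (∏ i, Bern (f i)) / ((n : ℝ) - l + 1) ^ k)
        = ((n - 1).factorial : ℝ) / ((n - 1 - l).factorial : ℝ) / ((n : ℝ) - l + 1) ^ k *
            coeff l (Gg ^ n) := by
      intro l
      rw [show (((n - 1).factorial : ℝ) / ((n - 1 - l).factorial : ℝ) / ((n : ℝ) - l + 1) ^ k *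
            coeff l (Gg ^ n)) = (((n - 1).factorial : ℝ) / ((n - 1 - l).factorial : ℝ) /
            ((n : ℝ) - l + 1) ^ k) * coeff l (Gg ^ n) from rfl, ← PC_core_tuple n l,
        Finset.mul_sum]
      apply Finset.sum_congr rfl
      intro f _
      simp only [div_eq_mul_inv, mul_inv]
      ring
    rw [Finset.sum_congr rfl fun l _ => tup1 l]
    simp only [pow_zero, Nat.sub_zero, Nat.factorial_zero, Nat.cast_one, div_one, one_mul]
    rw [Finset.sum_range_succ, Nat.sub_self]
    simp only [Nat.cast_zero, zero_div, zero_mul, add_zero]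
    rw [Finset.mul_sum]
    apply Finset.sum_congr rfl
    intro l hl
    rw [Finset.mem_range] at hl
    have c1 : ((n - l : ℕ) : ℝ) = (n : ℝ) - l := by
      rw [Nat.cast_sub (by omega)]
    have hnlf : ((n - l).factorial : ℝ) = ((n - l : ℕ) : ℝ) * ((n - 1 - l).factorial : ℝ) := by
      have h := Nat.factorial_succ (n - 1 - l)
      rw [show n - 1 - l + 1 = n - l from by omega] at h
      exact_mod_cast congrArg (Nat.cast : ℕ → ℝ) h
    have hw : ((n : ℝ) - l + 1) ^ k ≠ 0 := by
      apply zpow_ne_zero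
      have : (0 : ℝ) ≤ ((n - l : ℕ) : ℝ) := Nat.cast_nonneg _
      rw [c1] at this
      linarith
    have hfl : ((n - 1 - l).factorial : ℝ) ≠ 0 := Nat.cast_ne_zero.mpr (Nat.factorial_ne_zero _)
    have hnl0 : ((n : ℝ) - l) ≠ 0 := by
      have : (l : ℝ) < n := by exact_mod_cast hl
      linarith
    rw [hnf, hnlf, c1]
    field_simp [hn0, hw, hfl, hnl0]
  · -- j ≥ 1 chunk
    rw [Finset.mul_sum]
    apply Finset.sum_congr rfl
    intro j hj
    rw [Finset.mem_Icc] at hj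
    have tup2 : ∀ l : ℕ, (∑ f ∈ Finset.Nat.antidiagonalTuple n l,
        (-1 : ℝ) ^ j *
            (((n - 1).factorial : ℝ) /
              ((∏ i, ((f i).factorial : ℝ)) * ((n - 1 - l).factorial : ℝ))) *
            ((n - l).choose j : ℝ) *
            (∏ i, Bern (f i)) / ((n : ℝ) - l - j + 1) ^ k)
        = (-1 : ℝ) ^ j * (((n - 1).factorial : ℝ) / ((n - 1 - l).factorial : ℝ)) *
            ((n - l).choose j : ℝ) * coeff l (Gg ^ n) / ((n : ℝ) - l - j + 1) ^ k := by
      intro l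
      rw [show ((-1 : ℝ) ^ j * (((n - 1).factorial : ℝ) / ((n - 1 - l).factorial : ℝ)) *
            ((n - l).choose j : ℝ) * coeff l (Gg ^ n) / ((n : ℝ) - l - j + 1) ^ k)
          = ((-1 : ℝ) ^ j * (((n - 1).factorial : ℝ) / ((n - 1 - l).factorial : ℝ)) *
            ((n - l).choose j : ℝ) / ((n : ℝ) - l - j + 1) ^ k) * coeff l (Gg ^ n) from by
            ring, ← PC_core_tuple n l, Finset.mul_sum]
      apply Finset.sum_congr rfl
      intro f _
      simp only [div_eq_mul_inv, mul_inv]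
      ring
    rw [Finset.sum_congr rfl fun l _ => tup2 l, Finset.sum_mul,
      show n - j + 1 = n + 1 - j from by omega, Finset.mul_sum, Finset.mul_sum]
    apply Finset.sum_congr rfl
    intro l hl
    rw [Finset.mem_range] at hl
    have hlj : l + j ≤ n := by omega
    have c1 : ((n - l : ℕ) : ℝ) = (n : ℝ) - l := by rw [Nat.cast_sub (by omega)]
    have c2 : ((n - l - j : ℕ) : ℝ) = (n : ℝ) - l - j := by
      rw [show n - l - j = n - (l + j) from by omega, Nat.cast_sub (by omega)]
      push_cast; ring
    have hch : ((n - l).choose j : ℝ) = ((n - l).factorial : ℝ) /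
        ((j.factorial : ℝ) * ((n - l - j).factorial : ℝ)) := by
      rw [Nat.cast_choose ℝ (by omega : j ≤ n - l)]
    have hnlf : ((n - l).factorial : ℝ) = ((n - l : ℕ) : ℝ) * ((n - 1 - l).factorial : ℝ) := by
      have h := Nat.factorial_succ (n - 1 - l)
      rw [show n - 1 - l + 1 = n - l from by omega] at h
      exact_mod_cast congrArg (Nat.cast : ℕ → ℝ) h
    have hw : ((n : ℝ) - l - j + 1) ^ k ≠ 0 := by
      apply zpow_ne_zero
      have : (0 : ℝ) ≤ ((n - l - j : ℕ) : ℝ) := Nat.cast_nonneg _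
      rw [c2] at this
      linarith
    have hfl : ((n - 1 - l).factorial : ℝ) ≠ 0 := Nat.cast_ne_zero.mpr (Nat.factorial_ne_zero _)
    have hfj : ((j.factorial : ℝ)) ≠ 0 := Nat.cast_ne_zero.mpr (Nat.factorial_ne_zero _)
    have hflj : (((n - l - j).factorial : ℝ)) ≠ 0 := Nat.cast_ne_zero.mpr (Nat.factorial_ne_zero _)
    have hnl0 : ((n : ℝ) - l) ≠ 0 := by
      have : (l : ℝ) < n := by exact_mod_cast (by omega : l < n)
      linarith
    rw [hch, hnf, hnlf, c1, c2, neg_pow]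
    field_simp [hn0, hw, hfl, hfj, hflj, hnl0]
end

section
/- For an integer k and integers n ≥ 1 and 1 ≤ j ≤ n, one has Σ_{m=j}^{n} ( C(m,j) / (m-j+1)^k ) S₁(n,m) = Σ_{l=0}^{n-j} Σ_{l_1+⋯+l_n=l} ( (n-1)! / (l_1!⋯l_n!(n-1-l)!) ) · C(n-l, j) · B_{l_1}⋯B_{l_n} / (n-l-j+1)^k, where the inner sum ranges over n-tuples of nonnegative integers l_1,…,l_n summing to l. -/
open PowerSeries Finset

namespace PCAux

/-- The series `(e^t - 1)/t`. -/
noncomputable def PB : PowerSeries ℝ := PowerSeries.mk fun m => (1 : ℝ) / (m + 1).factorial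

lemma hB0 : constantCoeff PB = 1 := by
  simp [PB, ← coeff_zero_eq_constantCoeff, coeff_mk]

lemma hQB : PB⁻¹ * PB = 1 := PowerSeries.inv_mul_cancel PB (by rw [hB0]; norm_num)

lemma L2 : X * d⁄dX ℝ PB = 1 + X * PB - PB := by
  ext n
  rcases n with _ | m
  · simp [PB, coeff_zero_eq_constantCoeff]
  · simp only [coeff_succ_X_mul, coeff_derivative, map_add, map_sub, PB, coeff_mk, coeff_one,
      if_neg (Nat.succ_ne_zero m)]
    have h1 : ((m + 1 + 1).factorial : ℝ) = (m + 1 + 1) * (m + 1).factorial := by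
      rw [Nat.factorial_succ]; push_cast; ring
    have h2 : ((m + 1).factorial : ℝ) ≠ 0 := Nat.cast_ne_zero.mpr (Nat.factorial_ne_zero _)
    have h3 : ((m + 1 + 1).factorial : ℝ) ≠ 0 := Nat.cast_ne_zero.mpr (Nat.factorial_ne_zero _)
    rw [h1]
    field_simp
    ring

lemma LQ : X * d⁄dX ℝ (PB⁻¹) = PB⁻¹ - PB⁻¹ ^ 2 - X * PB⁻¹ := by
  rw [PowerSeries.derivative_inv']
  have h : X * (-PB⁻¹ ^ 2 * d⁄dX ℝ PB) = -PB⁻¹ ^ 2 * (X * d⁄dX ℝ PB) := by ring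
  rw [h, L2]
  have h2 : PB⁻¹ ^ 2 * PB = PB⁻¹ := by
    rw [pow_two, mul_assoc, hQB, mul_one]
  calc -PB⁻¹ ^ 2 * (1 + X * PB - PB)
      = -PB⁻¹ ^ 2 - X * (PB⁻¹ ^ 2 * PB) + PB⁻¹ ^ 2 * PB := by ring
  _ = PB⁻¹ - PB⁻¹ ^ 2 - X * PB⁻¹ := by rw [h2]; ring

lemma L4 (n : ℕ) : X * d⁄dX ℝ (PB⁻¹ ^ n) =
    (n : ℝ) • (PB⁻¹ ^ n - PB⁻¹ ^ (n + 1) - X * PB⁻¹ ^ n) := by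
  induction n with
  | zero => simp
  | succ n ih =>
    rw [pow_succ, Derivation.leibniz]
    simp only [smul_eq_mul, PowerSeries.smul_eq_C_mul] at ih ⊢
    have hx : X * (PB⁻¹ ^ n * d⁄dX ℝ PB⁻¹ + PB⁻¹ * d⁄dX ℝ (PB⁻¹ ^ n))
        = PB⁻¹ ^ n * (X * d⁄dX ℝ PB⁻¹) + PB⁻¹ * (X * d⁄dX ℝ (PB⁻¹ ^ n)) := by ring
    rw [hx, ih, LQ]
    push_cast [map_add, map_one, map_ofNat]
    ring

lemma d0 (n : ℕ) : (coeff 0) (PB⁻¹ ^ n) = 1 := by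
  rw [coeff_zero_eq_constantCoeff, map_pow, PowerSeries.constantCoeff_inv, hB0]
  norm_num

lemma L5 (n m : ℕ) :
    (n : ℝ) * coeff (m+1) (PB⁻¹ ^ (n+1)) =
      ((n : ℝ) - (m+1)) * coeff (m+1) (PB⁻¹ ^ n) - n * coeff m (PB⁻¹ ^ n) := by
  have h := congrArg (coeff (m+1)) (L4 n)
  simp only [coeff_succ_X_mul, coeff_derivative, map_smul, map_sub, smul_eq_mul] at h
  push_cast at h ⊢
  linarith

lemma hlog : logSeries = X * Dlog := by
  ext n
  rcases n with _ | m
  · simp [logSeries, coeff_zero_eq_constantCoeff]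
  · rw [coeff_succ_X_mul]
    simp only [logSeries, Dlog, coeff_mk, if_neg (Nat.succ_ne_zero m)]
    push_cast
    rw [pow_succ, pow_succ]
    ring

lemma L1 : (1 + X) * d⁄dX ℝ logSeries = 1 := by
  ext n
  rw [add_mul, one_mul, map_add]
  rcases n with _ | m
  · simp [logSeries, coeff_zero_eq_constantCoeff, coeff_derivative]
  · rw [coeff_succ_X_mul]
    simp only [logSeries, coeff_derivative, coeff_mk, if_neg (Nat.succ_ne_zero m),
      if_neg (Nat.succ_ne_zero (m+1)), coeff_one, if_neg (Nat.succ_ne_zero m)]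
    have h1 : ((m:ℝ) + 1) ≠ 0 := by positivity
    have h2 : ((m:ℝ) + 1 + 1) ≠ 0 := by positivity
    push_cast
    rw [pow_succ (-1 : ℝ) (m+1)]
    field_simp
    ring

lemma L6 (m : ℕ) : (1 + X) * d⁄dX ℝ (logSeries ^ (m+1)) = ((m:ℝ)+1) • logSeries ^ m := by
  induction m with
  | zero => simpa using L1
  | succ m ih =>
    rw [pow_succ, Derivation.leibniz]
    simp only [smul_eq_mul, PowerSeries.smul_eq_C_mul] at ih ⊢
    have hx : (1 + X) * (logSeries ^ (m+1) * d⁄dX ℝ logSeries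
          + logSeries * d⁄dX ℝ (logSeries ^ (m+1)))
        = logSeries ^ (m+1) * ((1 + X) * d⁄dX ℝ logSeries)
          + logSeries * ((1 + X) * d⁄dX ℝ (logSeries ^ (m+1))) := by
      ring
    rw [hx, ih, L1]
    push_cast [map_add, map_one, map_ofNat]
    ring

lemma L6c (n m : ℕ) :
    ((n:ℝ)+1) * coeff (n+1) (logSeries ^ (m+1)) + n * coeff n (logSeries ^ (m+1)) =
      ((m:ℝ)+1) * coeff n (logSeries ^ m) := by
  have h := congrArg (coeff n) (L6 m)
  rw [add_mul, one_mul, map_add, map_smul, smul_eq_mul] at h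
  rcases n with _ | n
  · have h0 : coeff 0 (X * d⁄dX ℝ (logSeries ^ (m+1))) = 0 := by
      rw [coeff_zero_eq_constantCoeff, map_mul, constantCoeff_X, zero_mul]
    rw [h0, coeff_derivative] at h
    push_cast at h ⊢
    linarith
  · rw [coeff_succ_X_mul, coeff_derivative, coeff_derivative] at h
    push_cast at h ⊢
    linarith

lemma ctop (n : ℕ) : coeff n (logSeries ^ n) = 1 := by
  rw [hlog, mul_pow, coeff_X_pow_mul', if_pos le_rfl]
  simp only [Nat.sub_self, coeff_zero_eq_constantCoeff, map_pow]
  have : constantCoeff Dlog = 1 := by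
    simp [Dlog, ← coeff_zero_eq_constantCoeff, coeff_mk]
  rw [this, one_pow]

lemma key : ∀ n m : ℕ, 1 ≤ m → m ≤ n →
    (n : ℝ) * coeff n (logSeries ^ m) = (m : ℝ) * coeff (n - m) (PB⁻¹ ^ n) := by
  intro n
  induction n with
  | zero => exact fun m h1 h2 => ((by omega : False)).elim
  | succ n ih =>
    intro m hm1 hmn
    rcases eq_or_lt_of_le hmn with rfl | hlt
    · rw [ctop, Nat.sub_self, d0]
    have hmn' : m ≤ n := by omega
    have hn1 : 1 ≤ n := le_trans hm1 hmn'
    have hnR : (n : ℝ) ≠ 0 := Nat.cast_ne_zero.mpr (by omega)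
    obtain ⟨m', rfl⟩ : ∃ m', m = m' + 1 := ⟨m - 1, by omega⟩
    obtain ⟨t, ht⟩ : ∃ t, n - m' = t + 1 := ⟨n - m' - 1, by omega⟩
    have hnt : (n : ℝ) = (m' : ℝ) + t + 1 := by
      have : n = m' + t + 1 := by omega
      rw [this]; push_cast; ring
    have h6 := L6c n m'
    have h5 := L5 n t
    have h5' : (n:ℝ) * coeff (t+1) (PB⁻¹ ^ (n+1)) =
        (m':ℝ) * coeff (t+1) (PB⁻¹ ^ n) - n * coeff t (PB⁻¹ ^ n) := by
      have harg : (n:ℝ) - ((t:ℝ)+1) = (m':ℝ) := by rw [hnt]; ring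
      rw [← harg]
      push_cast at h5 ⊢
      linarith
    have hA : (n:ℝ) * coeff n (logSeries ^ m') = (m' : ℝ) * coeff (t+1) (PB⁻¹ ^ n) := by
      rcases Nat.eq_zero_or_pos m' with rfl | hm'
      · simp [coeff_one, (by omega : n ≠ 0)]
      · have h := ih m' hm' (by omega)
        rwa [ht] at h
    have hB := ih (m'+1) (by omega) hmn'
    rw [(show n - (m'+1) = t by omega)] at hB
    rw [(show (n+1) - (m'+1) = t + 1 by omega)]
    apply mul_left_cancel₀ hnR
    push_cast at h6 hA hB h5' ⊢
    linear_combination (n:ℝ) * h6 + ((m':ℝ)+1) * hA - (n:ℝ) * hB - ((m':ℝ)+1) * h5'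

lemma coeff_pow_tuple (φ : PowerSeries ℝ) (n l : ℕ) :
    coeff l (φ ^ n) = ∑ f ∈ Finset.Nat.antidiagonalTuple n l, ∏ i, coeff (f i) φ := by
  have h : φ ^ n = ∏ _i : Fin n, φ := by simp
  rw [h, PowerSeries.coeff_prod]
  exact Finset.sum_equiv Finsupp.equivFunOnFinite
    (fun g => by simp [Finset.mem_finsuppAntidiag, Finset.Nat.mem_antidiagonalTuple])
    (fun g _ => rfl)

lemma hBern (n : ℕ) : Bern n = (n.factorial : ℝ) * coeff n (PB⁻¹) := rfl

lemma S1_eq {n m : ℕ} (hm1 : 1 ≤ m) (hmn : m ≤ n) :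
    S1 n m = ((n-1).factorial : ℝ) / ((m-1).factorial : ℝ) * coeff (n - m) (PB⁻¹ ^ n) := by
  have hk := key n m hm1 hmn
  have hnR : (n : ℝ) ≠ 0 := Nat.cast_ne_zero.mpr (by omega)
  have hmR : (m : ℝ) ≠ 0 := Nat.cast_ne_zero.mpr (by omega)
  have hnf : (n.factorial : ℝ) = n * (n-1).factorial := by
    rw [(show n = (n-1) + 1 by omega)]
    rw [Nat.factorial_succ]
    push_cast
    ring
  have hmf : (m.factorial : ℝ) = m * (m-1).factorial := by
    rw [(show m = (m-1) + 1 by omega)]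
    rw [Nat.factorial_succ]
    push_cast
    ring
  have hm1f : ((m-1).factorial : ℝ) ≠ 0 := Nat.cast_ne_zero.mpr (Nat.factorial_ne_zero _)
  rw [S1, hnf, hmf]
  field_simp
  linear_combination hk

end PCAux

/-- part of Theorem 2 of the paper. -/
theorem stirling_sum_eq_bernoulli_multinomial_sum (k : ℤ) (n j : ℕ)
    (hn : 1 ≤ n) (hj1 : 1 ≤ j) (hjn : j ≤ n) :
    ∑ m ∈ Finset.Icc j n, ((m.choose j : ℝ) / ((m : ℝ) - j + 1) ^ k) * S1 n m =
      ∑ l ∈ Finset.range (n - j + 1), ∑ f ∈ Finset.Nat.antidiagonalTuple n l,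
        ((n - 1).factorial : ℝ) /
            ((∏ i, ((f i).factorial : ℝ)) * ((n - 1 - l).factorial : ℝ)) *
          ((n - l).choose j : ℝ) *
          (∏ i, Bern (f i)) / ((n : ℝ) - l - j + 1) ^ k := by
  classical
  refine (Finset.sum_nbij' (i := fun l => n - l) (j := fun m => n - m)
    ?_ ?_ ?_ ?_ ?_).symm
  · intro l hl
    simp only [Finset.mem_range] at hl
    simp only [Finset.mem_Icc]
    omega
  · intro m hm
    simp only [Finset.mem_Icc] at hm
    simp only [Finset.mem_range]
    omega
  · intro l hl; simp only [Finset.mem_range] at hl; show n - (n - l) = l; omega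
  · intro m hm; simp only [Finset.mem_Icc] at hm; show n - (n - m) = m; omega
  · intro l hl
    simp only [Finset.mem_range] at hl
    have hln : l ≤ n - 1 := by omega
    have hlj : l ≤ n - j := by omega
    -- the inner sum equals a single coefficient expression
    have hm1 : 1 ≤ n - l := by omega
    have hmn : n - l ≤ n := by omega
    have hfne : ((n - 1 - l).factorial : ℝ) ≠ 0 := Nat.cast_ne_zero.mpr (Nat.factorial_ne_zero _)
    have hqpos : (0:ℝ) < (n : ℝ) - l - j + 1 := by
      have h1 : (l:ℝ) ≤ (n:ℝ) - j := by
        have : (l:ℝ) ≤ ((n - j : ℕ) : ℝ) := Nat.cast_le.mpr hlj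
        rwa [Nat.cast_sub hjn] at this
      linarith
    have hq : ((n : ℝ) - l - j + 1) ^ k ≠ 0 := zpow_ne_zero k (by linarith)
    have hstep : ∀ f ∈ Finset.Nat.antidiagonalTuple n l,
        ((n - 1).factorial : ℝ) /
            ((∏ i, ((f i).factorial : ℝ)) * ((n - 1 - l).factorial : ℝ)) *
          ((n - l).choose j : ℝ) *
          (∏ i, Bern (f i)) / ((n : ℝ) - l - j + 1) ^ k
        = (((n - 1).factorial : ℝ) / ((n - 1 - l).factorial : ℝ) *
            ((n - l).choose j : ℝ) / ((n : ℝ) - l - j + 1) ^ k) *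
          ∏ i, PowerSeries.coeff (f i) (PCAux.PB⁻¹) := by
      intro f hf
      have hprod : (∏ i, Bern (f i)) =
          (∏ i, ((f i).factorial : ℝ)) * ∏ i, PowerSeries.coeff (f i) (PCAux.PB⁻¹) := by
        rw [← Finset.prod_mul_distrib]
        exact Finset.prod_congr rfl fun i _ => PCAux.hBern (f i)
      have hPne : (∏ i, ((f i).factorial : ℝ)) ≠ 0 :=
        Finset.prod_ne_zero_iff.mpr fun i _ => Nat.cast_ne_zero.mpr (Nat.factorial_ne_zero _)
      rw [hprod]
      field_simp
    rw [Finset.sum_congr rfl hstep, ← Finset.mul_sum, ← PCAux.coeff_pow_tuple]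
    rw [PCAux.S1_eq hm1 hmn]
    have hidx : n - (n - l) = l := by omega
    have hidx2 : n - l - 1 = n - 1 - l := by omega
    have hcast : ((n - l : ℕ) : ℝ) = (n : ℝ) - l := by
      rw [Nat.cast_sub (by omega)]
    rw [hidx, hidx2, hcast]
    ring
end

section
/- For every integer k and every integer n ≥ 1, the n-th poly-Cauchy number of the first kind satisfies C_n^(k) = Σ_{m=0}^{n} S₁(n,m)/(m+1)^k. -/
open PowerSeries Finset

lemma psComp_one (G : PowerSeries ℝ) : psComp 1 G = 1 := by
  ext n
  simp only [psComp, PowerSeries.coeff_mk, PowerSeries.coeff_one]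
  rw [Finset.sum_eq_single 0]
  · simp [PowerSeries.coeff_one]
  · intro b _ hb
    simp [PowerSeries.coeff_one, hb]
  · intro h
    simp at h

/-- part of Theorem 2 of the paper. -/
theorem polyCauchyNumber_eq_stirling_sum (k : ℤ) (n : ℕ) (hn : 1 ≤ n) :
    polyCauchy k n 0 = ∑ m ∈ Finset.range (n + 1), S1 n m / ((m : ℝ) + 1) ^ k := by
  have h0 : PowerSeries.rescale (-(0:ℝ)) (PowerSeries.exp ℝ) = 1 := by
    rw [neg_zero, PowerSeries.rescale_zero]
    simp [PowerSeries.exp]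
  rw [polyCauchy, h0, psComp_one, mul_one]
  simp only [psComp, PowerSeries.coeff_mk, Lif, S1, Finset.mul_sum]
  refine Finset.sum_congr rfl fun m _ => ?_
  have hm : ((m.factorial : ℝ)) ≠ 0 := Nat.cast_ne_zero.mpr m.factorial_ne_zero
  have hk : ((m : ℝ) + 1) ^ k ≠ 0 := zpow_ne_zero _ (by positivity)
  field_simp
end

section
/- For every integer k and every integer n ≥ 1, the n-th poly-Cauchy number of the first kind satisfies C_n^(k) = Σ_{l=0}^{n-1} Σ_{l_1+⋯+l_n=l} ( (n-1)! / (l_1!⋯l_n!(n-1-l)!) ) · B_{l_1}⋯B_{l_n} / (n-l+1)^k, where the inner sum ranges over n-tuples of nonnegative integers l_1,…,l_n summing to l. -/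
open PowerSeries Finset

section Aux

noncomputable def Eaux : PowerSeries ℝ := PowerSeries.mk fun m => (1:ℝ)/(m+1).factorial
noncomputable def Faux : PowerSeries ℝ := Eaux⁻¹
local notation "D" => PowerSeries.derivative ℝ

lemma Bern_eq (j : ℕ) : Bern j = (j.factorial : ℝ) * PowerSeries.coeff j Faux := rfl

lemma coeff_zero_X_mul (φ : PowerSeries ℝ) : PowerSeries.coeff 0 (X * φ) = 0 := by
  rw [coeff_zero_eq_constantCoeff_apply, map_mul, constantCoeff_X, zero_mul]

lemma constCoeff_Eaux : constantCoeff Eaux = 1 := by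
  simp [Eaux, ← coeff_zero_eq_constantCoeff_apply]

lemma FE : Faux * Eaux = 1 :=
  PowerSeries.inv_mul_cancel _ (by rw [constCoeff_Eaux]; norm_num)

lemma constCoeff_Faux : constantCoeff Faux = 1 := by
  simp [Faux, PowerSeries.constantCoeff_inv, constCoeff_Eaux]

lemma hXE : (X : PowerSeries ℝ) * Eaux = exp ℝ - 1 := by
  ext n
  cases n with
  | zero =>
    rw [coeff_zero_eq_constantCoeff_apply]
    simp only [map_sub, map_mul, constantCoeff_X, zero_mul, ← coeff_zero_eq_constantCoeff_apply,
      coeff_exp, coeff_one]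
    norm_num
  | succ n =>
    rw [coeff_succ_X_mul]
    simp [Eaux, coeff_exp, map_sub]

lemma hXDE : (X : PowerSeries ℝ) * D Eaux = exp ℝ - Eaux := by
  ext n
  cases n with
  | zero =>
    rw [coeff_zero_eq_constantCoeff_apply]
    simp only [map_sub, map_mul, constantCoeff_X, zero_mul, ← coeff_zero_eq_constantCoeff_apply,
      coeff_exp, Eaux, coeff_mk]
    norm_num
  | succ n =>
    rw [coeff_succ_X_mul, PowerSeries.coeff_derivative]
    simp only [map_sub, coeff_exp, Eaux, coeff_mk]
    have h1 : ((n+1+1).factorial : ℝ) = (n+2) * (n+1).factorial := by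
      push_cast [Nat.factorial_succ]; ring
    have h2 : ((n+1).factorial : ℝ) ≠ 0 := Nat.cast_ne_zero.2 (Nat.factorial_ne_zero _)
    rw [h1]
    have h3 : (algebraMap ℚ ℝ) (1 / ((n+1).factorial : ℚ)) = 1 / ((n+1).factorial : ℝ) := by
      push_cast [map_div₀]; simp
    rw [h3]
    field_simp
    ring

lemma hLX : logSeries = X * Dlog := by
  ext n
  cases n with
  | zero => rw [coeff_zero_X_mul]; simp [logSeries]
  | succ n =>
    rw [coeff_succ_X_mul]
    simp only [logSeries, Dlog, coeff_mk, Nat.succ_ne_zero, if_false]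
    push_cast
    rw [pow_succ, pow_succ]
    ring

lemma hDL : (1 + (X : PowerSeries ℝ)) * D logSeries = 1 := by
  ext n
  rw [add_mul, one_mul, map_add]
  cases n with
  | zero =>
    rw [coeff_zero_X_mul, PowerSeries.coeff_derivative]
    simp [logSeries]
  | succ n =>
    rw [coeff_succ_X_mul, PowerSeries.coeff_derivative, PowerSeries.coeff_derivative]
    simp only [logSeries, coeff_mk, Nat.succ_ne_zero, if_false, coeff_one]
    have h1 : ((n:ℝ)+1) ≠ 0 := by positivity
    have h2 : ((n:ℝ)+1+1) ≠ 0 := by positivity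
    push_cast
    rw [pow_succ, pow_succ]
    field_simp
    ring

lemma hXDF : (X : PowerSeries ℝ) * D Faux = Faux - X * Faux - Faux^2 := by
  have h0 : Faux • D Eaux + Eaux • D Faux = 0 := by
    rw [← Derivation.leibniz, FE, Derivation.map_one_eq_zero]
  rw [smul_eq_mul, smul_eq_mul] at h0
  linear_combination X*Faux*h0 + Faux^2*hXE - Faux^2*hXDE
    - (X * D Faux + X*Faux - Faux) * FE

lemma rec_c (m j : ℕ) :
    ((m:ℝ)+1) * PowerSeries.coeff (j+1) (Faux^(m+2)) =
      ((m:ℝ) - j) * PowerSeries.coeff (j+1) (Faux^(m+1))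
        - ((m:ℝ)+1) * PowerSeries.coeff j (Faux^(m+1)) := by
  have key : (X : PowerSeries ℝ) * D (Faux^(m+1)) =
      (m+1 : ℕ) • (Faux^(m+1) - X * Faux^(m+1) - Faux^(m+2)) := by
    rw [Derivation.leibniz_pow, Nat.add_sub_cancel, nsmul_eq_mul, smul_eq_mul, nsmul_eq_mul]
    linear_combination ((m+1 : ℕ) : PowerSeries ℝ) * Faux^m * hXDF
  have h := congrArg (PowerSeries.coeff (j+1)) key
  rw [coeff_succ_X_mul, PowerSeries.coeff_derivative, map_nsmul, map_sub, map_sub,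
    coeff_succ_X_mul, nsmul_eq_mul] at h
  push_cast at h ⊢
  linear_combination h

lemma rec_a (n m : ℕ) :
    ((n:ℝ)+1) * PowerSeries.coeff (n+1) (logSeries^(m+1))
      + n * PowerSeries.coeff n (logSeries^(m+1))
      = ((m:ℝ)+1) * PowerSeries.coeff n (logSeries^m) := by
  have key : (1 + (X : PowerSeries ℝ)) * D (logSeries^(m+1)) =
      (m+1 : ℕ) • logSeries^m := by
    rw [Derivation.leibniz_pow, Nat.add_sub_cancel, nsmul_eq_mul, smul_eq_mul, nsmul_eq_mul]
    linear_combination ((m+1 : ℕ) : PowerSeries ℝ) * logSeries^m * hDL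
  have h := congrArg (PowerSeries.coeff n) key
  rw [add_mul, one_mul, map_add, map_nsmul, nsmul_eq_mul] at h
  cases n with
  | zero =>
    rw [coeff_zero_X_mul, PowerSeries.coeff_derivative] at h
    push_cast at h ⊢
    linear_combination h
  | succ n =>
    rw [coeff_succ_X_mul, PowerSeries.coeff_derivative, PowerSeries.coeff_derivative] at h
    push_cast at h ⊢
    linear_combination h

lemma c_zero (n : ℕ) : PowerSeries.coeff 0 (Faux^n) = 1 := by
  rw [coeff_zero_eq_constantCoeff_apply, map_pow, constCoeff_Faux, one_pow]

lemma a_self (n : ℕ) : PowerSeries.coeff n (logSeries^n) = 1 := by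
  rw [hLX, mul_pow]
  have h0 := PowerSeries.coeff_X_pow_mul (Dlog^n) n 0
  rw [zero_add] at h0
  rw [h0, coeff_zero_eq_constantCoeff_apply, map_pow]
  have : constantCoeff Dlog = 1 := by
    rw [← coeff_zero_eq_constantCoeff_apply]; simp [Dlog]
  rw [this, one_pow]

lemma main_ind : ∀ n m : ℕ, 1 ≤ m → m ≤ n →
    (n:ℝ) * PowerSeries.coeff n (logSeries^m)
      = (m:ℝ) * PowerSeries.coeff (n-m) (Faux^n) := by
  intro n
  induction n with
  | zero => intro m h1 h2; omega
  | succ n ih =>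
    intro m hm1 hmn
    rcases eq_or_lt_of_le hmn with heq | hlt
    · subst heq
      rw [Nat.sub_self]; simp [a_self, c_zero]
    · have hmn' : m ≤ n := by omega
      obtain ⟨q, rfl⟩ : ∃ q, m = q + 1 := ⟨m - 1, by omega⟩
      obtain ⟨j, rfl⟩ : ∃ j, n = (q + 1) + j := ⟨n - (q+1), by omega⟩
      have hIH : ((q:ℝ)+1+j) * PowerSeries.coeff (q+1+j) (logSeries^(q+1))
          = ((q:ℝ)+1) * PowerSeries.coeff j (Faux^(q+1+j)) := by
        have h := ih (q+1) (by omega) (by omega)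
        have hidx : q+1+j - (q+1) = j := by omega
        rw [hidx] at h
        push_cast at h ⊢
        linear_combination h
      have hIH1 : ((q:ℝ)+1+j) * PowerSeries.coeff (q+1+j) (logSeries^q)
          = (q:ℝ) * PowerSeries.coeff (j+1) (Faux^(q+1+j)) := by
        rcases Nat.eq_zero_or_pos q with rfl | hq
        · simp [pow_zero, coeff_one]
        · have h := ih q hq (by omega)
          have hidx : q+1+j - q = j+1 := by omega
          rw [hidx] at h
          push_cast at h ⊢
          linear_combination h
      have hA := rec_a (q+1+j) q
      have hC := rec_c (q+j) j
      have hrw2 : q+j+2 = q+1+j+1 := by omega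
      have hrw1 : q+j+1 = q+1+j := by omega
      rw [hrw2, hrw1] at hC
      have hidx2 : q+1+j+1 - (q+1) = j+1 := by omega
      rw [hidx2]
      have hN : ((q:ℝ)+1+j) ≠ 0 := by positivity
      apply mul_left_cancel₀ hN
      push_cast at hA hC ⊢
      linear_combination ((q:ℝ)+1+j)*hA - ((q:ℝ)+1+j)*hIH + ((q:ℝ)+1)*hIH1 - ((q:ℝ)+1)*hC

lemma coeff_pow_tuple (φ : PowerSeries ℝ) (n l : ℕ) :
    PowerSeries.coeff l (φ ^ n) =
      ∑ f ∈ Finset.Nat.antidiagonalTuple n l, ∏ i, PowerSeries.coeff (f i) φ := by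
  rw [PowerSeries.coeff_pow]
  refine Finset.sum_bij' (fun σ _ => fun i : Fin n => σ i.val)
    (fun f _ => Finsupp.onFinset (Finset.range n)
      (fun t => if h : t < n then f ⟨t, h⟩ else 0) ?_) ?_ ?_ ?_ ?_ ?_
  · intro t ht
    rw [Finset.mem_range]
    by_contra h
    exact ht (dif_neg h)
  · intro σ hσ
    rw [Finset.mem_finsuppAntidiag] at hσ
    rw [Finset.Nat.mem_antidiagonalTuple]
    rw [Fin.sum_univ_eq_sum_range (fun t => σ t) n]
    exact hσ.1
  · intro f hf
    rw [Finset.Nat.mem_antidiagonalTuple] at hf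
    rw [Finset.mem_finsuppAntidiag]
    refine ⟨?_, Finsupp.support_onFinset_subset⟩
    calc (Finset.range n).sum ⇑(Finsupp.onFinset (Finset.range n)
          (fun t => if h : t < n then f ⟨t, h⟩ else 0) _)
        = ∑ i : Fin n, (if h : (i : ℕ) < n then f ⟨i, h⟩ else 0) :=
          (Fin.sum_univ_eq_sum_range (fun t => if h : t < n then f ⟨t, h⟩ else 0) n).symm
      _ = ∑ i : Fin n, f i := by
          refine Finset.sum_congr rfl fun i _ => ?_
          rw [dif_pos i.isLt]
      _ = l := hf
  · intro σ hσ
    rw [Finset.mem_finsuppAntidiag] at hσ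
    ext t
    simp only [Finsupp.onFinset_apply]
    split_ifs with h
    · rfl
    · by_contra hne
      have ht : t ∈ σ.support := Finsupp.mem_support_iff.2 fun h0 => hne h0.symm
      have := hσ.2 ht
      rw [Finset.mem_range] at this
      exact h this
  · intro f hf
    funext i
    simp [i.isLt]
  · intro σ hσ
    exact (Fin.prod_univ_eq_prod_range (fun t => PowerSeries.coeff (σ t) φ) n).symm

end Aux

/-- part of Theorem 2 of the paper. -/
theorem polyCauchyNumber_eq_bernoulli_multinomial_sum (k : ℤ) (n : ℕ) (hn : 1 ≤ n) :
    polyCauchy k n 0 =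
      ∑ l ∈ Finset.range n, ∑ f ∈ Finset.Nat.antidiagonalTuple n l,
        ((n - 1).factorial : ℝ) /
            ((∏ i, ((f i).factorial : ℝ)) * ((n - 1 - l).factorial : ℝ)) *
          (∏ i, Bern (f i)) / ((n : ℝ) - l + 1) ^ k := by
  classical
  -- Step 1: the second factor in polyCauchy is 1
  have h1 : psComp (PowerSeries.rescale (-(0:ℝ)) (PowerSeries.exp ℝ)) logSeries = 1 := by
    have hr : PowerSeries.rescale (-(0:ℝ)) (PowerSeries.exp ℝ) = 1 := by
      rw [neg_zero, PowerSeries.rescale_zero]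
      simp only [RingHom.coe_comp, Function.comp_apply]
      rw [← coeff_zero_eq_constantCoeff_apply, coeff_exp]
      simp
    rw [hr]
    ext j
    simp only [psComp, coeff_mk, PowerSeries.coeff_one]
    rw [Finset.sum_eq_single 0]
    · simp [PowerSeries.coeff_one]
    · intro b _ hb; simp [hb]
    · intro h; simp at h
  have h2 : polyCauchy k n 0 = (n.factorial : ℝ) *
      ∑ m ∈ Finset.range (n+1),
        (1 / ((m.factorial:ℝ) * ((m:ℝ)+1)^k)) * PowerSeries.coeff n (logSeries ^ m) := by
    rw [polyCauchy, h1, mul_one, psComp]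
    simp only [coeff_mk, Lif]
  rw [h2]
  -- Step 2: inner sums on the RHS
  have hinner : ∀ l ∈ Finset.range n, (∑ f ∈ Finset.Nat.antidiagonalTuple n l,
      ((n - 1).factorial : ℝ) /
          ((∏ i, ((f i).factorial : ℝ)) * ((n - 1 - l).factorial : ℝ)) *
        (∏ i, Bern (f i)) / ((n : ℝ) - l + 1) ^ k)
      = ((n-1).factorial : ℝ) / (((n-1-l).factorial : ℝ) * ((n:ℝ) - (l:ℝ) + 1)^k) *
          PowerSeries.coeff l (Faux ^ n) := by
    intro l hl
    rw [Finset.mem_range] at hl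
    rw [coeff_pow_tuple, Finset.mul_sum]
    apply Finset.sum_congr rfl
    intro f _
    have hco : ∏ i, PowerSeries.coeff (f i) Faux
        = (∏ i, Bern (f i)) / (∏ i, ((f i).factorial:ℝ)) := by
      rw [← Finset.prod_div_distrib]
      apply Finset.prod_congr rfl
      intro i _
      rw [Bern_eq]
      have : ((f i).factorial : ℝ) ≠ 0 := Nat.cast_ne_zero.2 (Nat.factorial_ne_zero _)
      field_simp
    rw [hco]
    have hf1 : (∏ i, ((f i).factorial:ℝ)) ≠ 0 :=
      Finset.prod_ne_zero_iff.2 fun i _ => Nat.cast_ne_zero.2 (Nat.factorial_ne_zero _)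
    have hf2 : (((n-1-l).factorial : ℝ)) ≠ 0 := Nat.cast_ne_zero.2 (Nat.factorial_ne_zero _)
    have hbpos : (0:ℝ) < (n:ℝ) - (l:ℝ) + 1 := by
      have : (l:ℝ) < n := by exact_mod_cast hl
      linarith
    have hz : ((n:ℝ) - (l:ℝ) + 1)^k ≠ 0 := zpow_ne_zero _ (ne_of_gt hbpos)
    field_simp
    try exact Or.inl trivial
  rw [Finset.sum_congr rfl hinner]
  -- Step 3: reflect the RHS sum and split off the m = 0 term on the LHS
  rw [← Finset.sum_range_reflect
    (fun l => ((n-1).factorial : ℝ) / (((n-1-l).factorial : ℝ) * ((n:ℝ) - (l:ℝ) + 1)^k) *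
      PowerSeries.coeff l (Faux ^ n)) n]
  rw [Finset.sum_range_succ']
  have hzero : (1 / (((0:ℕ).factorial:ℝ) * (((0:ℕ):ℝ)+1)^k)) *
      PowerSeries.coeff n (logSeries ^ 0) = 0 := by
    rcases Nat.exists_eq_add_of_le hn with ⟨p, rfl⟩
    simp [PowerSeries.coeff_one, Nat.add_comm]
  rw [hzero, add_zero, Finset.mul_sum]
  -- Step 4: termwise comparison
  apply Finset.sum_congr rfl
  intro m hm
  rw [Finset.mem_range] at hm
  have hidx1 : n - 1 - (n - 1 - m) = m := by omega
  have hidx2 : n - (m+1) = n - 1 - m := by omega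
  rw [hidx1]
  have hcast : ((n - 1 - m : ℕ) : ℝ) = (n:ℝ) - 1 - (m:ℝ) := by
    have h1 : m ≤ n - 1 := by omega
    rw [Nat.cast_sub h1, Nat.cast_sub hn, Nat.cast_one]
  rw [hcast]
  have hbase : (n:ℝ) - ((n:ℝ) - 1 - (m:ℝ)) + 1 = (m:ℝ) + 2 := by ring
  rw [hbase]
  have hmain := main_ind n (m+1) (by omega) (by omega)
  rw [hidx2] at hmain
  have hz : ((m:ℝ) + 2)^k ≠ 0 := zpow_ne_zero _ (by positivity)
  have hfn : (n.factorial : ℝ) = (n:ℝ) * ((n-1).factorial : ℝ) := by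
    rw [← Nat.mul_factorial_pred (by omega : n ≠ 0)]
    push_cast
    ring
  have hfm : (((m+1):ℕ).factorial : ℝ) = ((m:ℝ)+1) * (m.factorial : ℝ) := by
    rw [Nat.factorial_succ]
    push_cast
    ring
  have hmfac : (m.factorial : ℝ) ≠ 0 := Nat.cast_ne_zero.2 (Nat.factorial_ne_zero _)
  have hn1fac : ((n-1).factorial : ℝ) ≠ 0 := Nat.cast_ne_zero.2 (Nat.factorial_ne_zero _)
  have hnne : (n:ℝ) ≠ 0 := by
    have : 0 < n := by omega
    positivity
  have hm1ne : ((m:ℝ)+1) ≠ 0 := by positivity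
  rw [hfn, hfm]
  push_cast
  field_simp
  ring_nf
  ring_nf at hmain
  push_cast at hmain
  linear_combination (((2:ℝ)+(m:ℝ))^k) * hmain
end

section
/- For every integer k and every integer n ≥ 0, the poly-Cauchy polynomial of the first kind has the explicit expansion C_n^(k)(x) = Σ_{m=0}^{n} S₁(n,m) Σ_{j=0}^{m} C(m,j) (-x)^j / (m-j+1)^k. -/
open PowerSeries Finset

lemma coeff_log_pow_eq_zero {p i : ℕ} (h : p < i) :
    PowerSeries.coeff p (logSeries ^ i) = 0 := by
  have hX : (PowerSeries.X : PowerSeries ℝ) ∣ logSeries :=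
    PowerSeries.X_dvd_iff.mpr (by simp [logSeries])
  exact PowerSeries.X_pow_dvd_iff.mp (pow_dvd_pow_of_dvd hX i) p h


lemma hext (H : PowerSeries ℝ) {p n : ℕ} (hp : p ≤ n) :
    PowerSeries.coeff p (psComp H logSeries)
      = ∑ i ∈ range (n+1), PowerSeries.coeff i H * PowerSeries.coeff p (logSeries ^ i) := by
  simp only [psComp, coeff_mk]
  refine Finset.sum_subset (fun i hi => ?_) (fun i hi hni => ?_)
  · simp only [mem_range] at *; omega
  · simp only [mem_range, not_lt] at hni
    rw [coeff_log_pow_eq_zero (by omega), mul_zero]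

lemma triangle_sum (n : ℕ) (h : ℕ → ℕ → ℝ) :
    (∑ m ∈ range (n+1), ∑ ij ∈ Finset.HasAntidiagonal.antidiagonal m, h ij.1 ij.2)
      = ∑ ij ∈ (range (n+1) ×ˢ range (n+1)).filter (fun p => p.1 + p.2 ≤ n),
          h ij.1 ij.2 := by
  rw [← Finset.sum_biUnion]
  · congr 1
    ext ⟨i, j⟩
    simp only [Finset.mem_biUnion, Finset.mem_range, Finset.HasAntidiagonal.mem_antidiagonal,
      Finset.mem_filter, Finset.mem_product]
    constructor
    · rintro ⟨m, hm, hmem⟩; omega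
    · intro h'; exact ⟨i + j, by omega, by simp⟩
  · intro a _ b _ hab
    refine Finset.disjoint_left.mpr ?_
    rintro ⟨i, j⟩ hpa hpb
    rw [Finset.HasAntidiagonal.mem_antidiagonal] at hpa hpb
    exact hab (by omega)

lemma key (F G : PowerSeries ℝ) (n : ℕ) :
    PowerSeries.coeff n (psComp F logSeries * psComp G logSeries)
      = ∑ m ∈ Finset.range (n+1),
          PowerSeries.coeff m (F * G) * PowerSeries.coeff n (logSeries ^ m) := by
  rw [PowerSeries.coeff_mul]
  have step1 : ∑ pq ∈ Finset.HasAntidiagonal.antidiagonal n,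
      PowerSeries.coeff pq.1 (psComp F logSeries) * PowerSeries.coeff pq.2 (psComp G logSeries)
      = ∑ pq ∈ Finset.HasAntidiagonal.antidiagonal n, ∑ ij ∈ range (n+1) ×ˢ range (n+1),
          (PowerSeries.coeff ij.1 F * PowerSeries.coeff ij.2 G) *
          (PowerSeries.coeff pq.1 (logSeries ^ ij.1) * PowerSeries.coeff pq.2 (logSeries ^ ij.2)) := by
    refine Finset.sum_congr rfl ?_
    rintro ⟨p, q⟩ hpq
    rw [Finset.HasAntidiagonal.mem_antidiagonal] at hpq
    rw [hext F (show p ≤ n by omega), hext G (show q ≤ n by omega), Finset.sum_mul_sum,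
      Finset.sum_product]
    exact Finset.sum_congr rfl fun i _ => Finset.sum_congr rfl fun j _ => by ring
  rw [step1, Finset.sum_comm]
  have step2 : ∀ ij ∈ range (n+1) ×ˢ range (n+1),
      (∑ pq ∈ Finset.HasAntidiagonal.antidiagonal n,
        (PowerSeries.coeff ij.1 F * PowerSeries.coeff ij.2 G) *
        (PowerSeries.coeff pq.1 (logSeries ^ ij.1) * PowerSeries.coeff pq.2 (logSeries ^ ij.2)))
      = (PowerSeries.coeff ij.1 F * PowerSeries.coeff ij.2 G) *
          PowerSeries.coeff n (logSeries ^ (ij.1 + ij.2)) := by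
    rintro ⟨i, j⟩ _
    rw [← Finset.mul_sum, pow_add, PowerSeries.coeff_mul]
  rw [Finset.sum_congr rfl step2]
  have step3 : ∑ m ∈ range (n+1),
      PowerSeries.coeff m (F * G) * PowerSeries.coeff n (logSeries ^ m)
      = ∑ m ∈ range (n+1), ∑ ij ∈ Finset.HasAntidiagonal.antidiagonal m,
          (PowerSeries.coeff ij.1 F * PowerSeries.coeff ij.2 G) *
            PowerSeries.coeff n (logSeries ^ (ij.1 + ij.2)) := by
    refine Finset.sum_congr rfl fun m _ => ?_
    rw [PowerSeries.coeff_mul, Finset.sum_mul]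
    refine Finset.sum_congr rfl ?_
    rintro ⟨i, j⟩ hij
    rw [Finset.HasAntidiagonal.mem_antidiagonal] at hij
    rw [hij]
  rw [step3, triangle_sum n (fun i j => PowerSeries.coeff i F * PowerSeries.coeff j G *
    PowerSeries.coeff n (logSeries ^ (i + j)))]
  symm
  refine Finset.sum_subset (Finset.filter_subset _ _) ?_
  rintro ⟨i, j⟩ hij hnij
  simp only [Finset.mem_filter, Finset.mem_product, Finset.mem_range] at hij hnij
  rw [coeff_log_pow_eq_zero (by omega), mul_zero]

/-- explicit expansion of the poly-Cauchy polynomials. -/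
theorem polyCauchy_explicit_expansion (k : ℤ) (n : ℕ) (x : ℝ) :
    polyCauchy k n x =
      ∑ m ∈ Finset.range (n + 1), S1 n m *
        ∑ j ∈ Finset.range (m + 1),
          (m.choose j : ℝ) * (-x) ^ j / ((m : ℝ) - j + 1) ^ k := by
  unfold polyCauchy
  rw [key, Finset.mul_sum]
  refine Finset.sum_congr rfl fun m hm => ?_
  rw [Finset.mem_range] at hm
  rw [PowerSeries.coeff_mul, Finset.Nat.sum_antidiagonal_eq_sum_range_succ_mk]
  rw [← Finset.sum_range_reflect (fun j => (m.choose j : ℝ) * (-x) ^ j / ((m : ℝ) - j + 1) ^ k) (m+1)]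
  rw [S1, Finset.sum_mul, Finset.mul_sum, Finset.mul_sum]
  refine Finset.sum_congr rfl fun i hi => ?_
  rw [Finset.mem_range] at hi
  have hi' : i ≤ m := by omega
  simp only [Lif, PowerSeries.coeff_mk, PowerSeries.coeff_rescale, PowerSeries.coeff_exp]
  have h1 : m + 1 - 1 - i = m - i := by omega
  rw [h1, Nat.choose_symm hi']
  have h3 : ((m : ℝ) - ((m - i : ℕ) : ℝ) + 1) = (i : ℝ) + 1 := by
    rw [Nat.cast_sub hi']; ring
  rw [h3]
  have h4 : ((m.choose i : ℕ) : ℝ) = (m.factorial : ℝ) / ((i.factorial : ℝ) * ((m - i).factorial : ℝ)) := by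
    rw [Nat.cast_choose ℝ hi']
  have h5 : (algebraMap ℚ ℝ) (1 / ((m - i).factorial : ℚ)) = 1 / ((m - i).factorial : ℝ) := by
    push_cast [map_div₀]
    norm_num
  rw [h4, h5]
  have hf1 : (i.factorial : ℝ) ≠ 0 := Nat.cast_ne_zero.mpr i.factorial_ne_zero
  have hf2 : ((m - i).factorial : ℝ) ≠ 0 := Nat.cast_ne_zero.mpr (m - i).factorial_ne_zero
  have hf3 : (m.factorial : ℝ) ≠ 0 := Nat.cast_ne_zero.mpr m.factorial_ne_zero
  have hz1 : ((i : ℝ) + 1) ^ k ≠ 0 := zpow_ne_zero k (by positivity)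
  field_simp
end

section
/- For every integer k, every integer n ≥ 0, and all x, y, the poly-Cauchy polynomials of the first kind satisfy the Sheffer-type addition formula C_n^(k)(x+y) = Σ_{j=0}^{n} (-1)^{n-j} C(n,j) C_j^(k)(x) · y^{(n-j)}, where y^{(m)} = y(y+1)⋯(y+m-1) denotes the rising factorial. -/
open PowerSeries Finset

namespace Aux

lemma constantCoeff_logSeries : constantCoeff logSeries = 0 := by
  rw [← coeff_zero_eq_constantCoeff_apply]
  simp [logSeries]

lemma coeff_logSeries_pow {n m : ℕ} (h : n < m) :
    coeff n (logSeries ^ m) = 0 := by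
  have : (X : PowerSeries ℝ) ^ m ∣ logSeries ^ m :=
    pow_dvd_pow_of_dvd (X_dvd_iff.2 constantCoeff_logSeries) m
  exact (X_pow_dvd_iff.1 this) n h

lemma coeff_logpow_mul {n m : ℕ} (h : n < m) (S : PowerSeries ℝ) :
    coeff n (logSeries ^ m * S) = 0 := by
  rw [coeff_mul]
  apply Finset.sum_eq_zero
  rintro ⟨i, j⟩ hij
  have hi : i ≤ n := by
    have := Finset.HasAntidiagonal.antidiagonal.fst_le hij
    simpa using this
  rw [coeff_logSeries_pow (lt_of_le_of_lt hi h), zero_mul]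

lemma coeff_aeval_congr {P Q : Polynomial ℝ} (n : ℕ)
    (h : ∀ m, m ≤ n → P.coeff m = Q.coeff m) :
    coeff n (Polynomial.aeval logSeries P) =
      coeff n (Polynomial.aeval logSeries Q) := by
  have hdvd : (Polynomial.X : Polynomial ℝ) ^ (n + 1) ∣ P - Q := by
    rw [Polynomial.X_pow_dvd_iff]
    intro d hd
    rw [Polynomial.coeff_sub, h d (Nat.lt_succ_iff.1 hd), sub_self]
  obtain ⟨R, hR⟩ := hdvd
  have hP : P = Q + Polynomial.X ^ (n + 1) * R := by linear_combination hR
  rw [hP, map_add, map_mul, map_pow, Polynomial.aeval_X, map_add,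
    coeff_logpow_mul (Nat.lt_succ_self n), add_zero]

lemma coeff_psComp (F : PowerSeries ℝ) {n N : ℕ} (hn : n < N) :
    coeff n (psComp F logSeries) =
      coeff n (Polynomial.aeval logSeries (trunc N F)) := by
  obtain ⟨N, rfl⟩ := Nat.exists_eq_add_of_lt hn
  rw [Polynomial.aeval_eq_sum_range' (n := n + N + 1)
    (lt_of_lt_of_le (natDegree_trunc_lt F (n + N)) (le_refl _)), map_sum]
  rw [psComp, coeff_mk]
  rw [← Finset.sum_subset (Finset.range_subset_range.2 (by omega : n + 1 ≤ n + N + 1))]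
  · apply Finset.sum_congr rfl
    intro m hm
    have hm' : m < n + N + 1 := by have := Finset.mem_range.1 hm; omega
    rw [LinearMap.map_smul, coeff_trunc, if_pos hm', smul_eq_mul]
  · intro m _ hm
    rw [LinearMap.map_smul, coeff_logSeries_pow (by simpa using hm), smul_zero]

lemma psComp_mul (F G : PowerSeries ℝ) :
    psComp (F * G) logSeries = psComp F logSeries * psComp G logSeries := by
  ext n
  rw [coeff_psComp (F * G) (Nat.lt_succ_self n)]
  rw [coeff_aeval_congr n (Q := trunc (n + 1) F * trunc (n + 1) G) ?_]
  · rw [map_mul, PowerSeries.coeff_mul, PowerSeries.coeff_mul]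
    apply Finset.sum_congr rfl
    rintro ⟨i, j⟩ hij
    have hi : i ≤ n := by simpa using Finset.HasAntidiagonal.antidiagonal.fst_le hij
    have hj : j ≤ n := by simpa using Finset.HasAntidiagonal.antidiagonal.snd_le hij
    rw [← coeff_psComp F (Nat.lt_succ_of_le hi), ← coeff_psComp G (Nat.lt_succ_of_le hj)]
  · intro m hm
    rw [Polynomial.coeff_mul, coeff_trunc, if_pos (Nat.lt_succ_of_le hm),
      PowerSeries.coeff_mul]
    apply Finset.sum_congr rfl
    rintro ⟨i, j⟩ hij
    have hi : i ≤ m := by simpa using Finset.HasAntidiagonal.antidiagonal.fst_le hij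
    have hj : j ≤ m := by simpa using Finset.HasAntidiagonal.antidiagonal.snd_le hij
    rw [coeff_trunc, coeff_trunc, if_pos (by omega), if_pos (by omega)]

noncomputable def Geo : PowerSeries ℝ := PowerSeries.mk fun n => (-1) ^ n

lemma derivativeFun_logSeries : derivativeFun logSeries = Geo := by
  ext n
  rw [show derivativeFun logSeries = d⁄dX ℝ logSeries from rfl, coeff_derivativeFun, Geo, coeff_mk, logSeries, coeff_mk, if_neg (Nat.succ_ne_zero n)]
  have h : ((n : ℝ) + 1) ≠ 0 := by positivity
  field_simp
  rw [pow_succ, pow_succ]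
  push_cast
  ring

lemma one_add_X_mul_geo : (1 + X) * Geo = (1 : PowerSeries ℝ) := by
  ext n
  rw [add_mul, one_mul, map_add]
  cases n with
  | zero =>
    rw [coeff_zero_X_mul, add_zero, coeff_one, if_pos rfl, coeff_zero_eq_constantCoeff_apply,
      Geo, constantCoeff_mk, pow_zero]
  | succ k =>
    rw [coeff_succ_X_mul, Geo, coeff_mk, coeff_mk, coeff_one, if_neg (Nat.succ_ne_zero k)]
    rw [pow_succ]
    ring

lemma recurrence (n m : ℕ) :
    ((n : ℝ) + 1) * coeff (n + 1) (logSeries ^ (m + 1))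
      + n * coeff n (logSeries ^ (m + 1))
      = ((m : ℝ) + 1) * coeff n (logSeries ^ m) := by
  have h1 : derivativeFun (logSeries ^ (m + 1)) = d⁄dX ℝ (logSeries ^ (m + 1)) := rfl
  have h2 : d⁄dX ℝ logSeries = Geo := derivativeFun_logSeries
  have hd : derivativeFun (logSeries ^ (m + 1))
      = C ((m : ℝ) + 1) * (logSeries ^ m * Geo) := by
    rw [h1, Derivation.leibniz_pow, Nat.add_sub_cancel, h2]
    simp only [smul_eq_mul, nsmul_eq_mul]
    rw [← map_natCast (C (R := ℝ)) (m + 1)]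
    push_cast
    ring
  have key : (1 + X) * derivativeFun (logSeries ^ (m + 1))
      = C ((m : ℝ) + 1) * logSeries ^ m := by
    rw [hd, show (1 + X) * (C ((m : ℝ) + 1) * (logSeries ^ m * Geo))
      = C ((m : ℝ) + 1) * ((1 + X) * Geo * logSeries ^ m) from by ring,
      one_add_X_mul_geo, one_mul]
  have hc := congrArg (coeff n) key
  rw [add_mul, one_mul, map_add, coeff_C_mul, h1, coeff_derivativeFun] at hc
  cases n with
  | zero =>
    rw [coeff_zero_X_mul] at hc
    push_cast at hc ⊢
    linear_combination hc
  | succ k =>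
    rw [coeff_succ_X_mul, coeff_derivativeFun] at hc
    push_cast at hc ⊢
    linear_combination hc

lemma coeff_psComp_rescale_exp (a : ℝ) (n : ℕ) :
    coeff n (psComp (rescale a (exp ℝ)) logSeries)
      = ∑ m ∈ Finset.range (n + 1),
          a ^ m / m.factorial * coeff n (logSeries ^ m) := by
  rw [psComp, coeff_mk]
  refine Finset.sum_congr rfl fun m _ => ?_
  rw [coeff_rescale, coeff_exp, eq_ratCast]
  push_cast
  ring

lemma fallingFactorial_eq (a : ℝ) (n : ℕ) :
    (n.factorial : ℝ) * coeff n (psComp (rescale a (exp ℝ)) logSeries)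
      = ∏ i ∈ Finset.range n, (a - i) := by
  induction n with
  | zero => simp [coeff_psComp_rescale_exp]
  | succ n ih =>
    rw [coeff_psComp_rescale_exp] at ih ⊢
    set c : ℕ → ℝ := fun m => coeff n (logSeries ^ m) with hc
    set d : ℕ → ℝ := fun m => coeff (n + 1) (logSeries ^ m) with hd
    set T : ℝ := ∑ m ∈ Finset.range (n + 1), a ^ m / m.factorial * c m with hT
    set S : ℝ := ∑ m ∈ Finset.range (n + 2), a ^ m / m.factorial * d m with hS
    have hS' : S = ∑ m ∈ Finset.range (n + 1),
        a ^ (m + 1) / (m + 1).factorial * d (m + 1) := by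
      rw [hS, Finset.sum_range_succ' (fun m => a ^ m / m.factorial * d m) (n + 1)]
      have : d 0 = 0 := by
        simp [hd, coeff_one, Nat.succ_ne_zero]
      simp [this]
    have key : ∀ m : ℕ, ((n : ℝ) + 1) * (a ^ (m + 1) / (m + 1).factorial * d (m + 1))
        = a * (a ^ m / m.factorial * c m)
          - n * (a ^ (m + 1) / (m + 1).factorial * c (m + 1)) := by
      intro m
      have h2 : ((n : ℝ) + 1) * d (m + 1) = ((m : ℝ) + 1) * c m - n * c (m + 1) := by
        have := recurrence n m
        simp only [hc, hd]
        linear_combination this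
      have hfac : ((m + 1).factorial : ℝ) = ((m : ℝ) + 1) * m.factorial := by
        rw [Nat.factorial_succ]; push_cast; ring
      have hm0 : ((m : ℝ) + 1) ≠ 0 := by positivity
      have hmf : (m.factorial : ℝ) ≠ 0 := Nat.cast_ne_zero.2 m.factorial_ne_zero
      calc ((n : ℝ) + 1) * (a ^ (m + 1) / (m + 1).factorial * d (m + 1))
          = a ^ (m + 1) / (m + 1).factorial * (((n : ℝ) + 1) * d (m + 1)) := by ring
        _ = a ^ (m + 1) / (m + 1).factorial * (((m : ℝ) + 1) * c m - n * c (m + 1)) := by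
            rw [h2]
        _ = _ := by rw [hfac]; field_simp; ring
    have hU : (∑ m ∈ Finset.range (n + 1),
        a ^ (m + 1) / (m + 1).factorial * c (m + 1)) = T - c 0 := by
      have h1 := Finset.sum_range_succ' (fun m => a ^ m / m.factorial * c m) (n + 1)
      have h2 := Finset.sum_range_succ (fun m => a ^ m / m.factorial * c m) (n + 1)
      have h3 : c (n + 1) = 0 := coeff_logSeries_pow (Nat.lt_succ_self n)
      simp only [h3, mul_zero, add_zero, pow_zero, Nat.factorial_zero, Nat.cast_one,
        one_mul] at h1 h2
      rw [← hT] at h2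
      rw [h2] at h1
      norm_num at h1
      linarith [h1]
    have hnc : (n : ℝ) * c 0 = 0 := by
      cases n with
      | zero => simp
      | succ k =>
        have : c 0 = 0 := by simp [hc, coeff_one, Nat.succ_ne_zero]
        rw [this, mul_zero]
    have step : ((n : ℝ) + 1) * S = (a - n) * T := by
      calc ((n : ℝ) + 1) * S
          = ∑ m ∈ Finset.range (n + 1),
              ((n : ℝ) + 1) * (a ^ (m + 1) / (m + 1).factorial * d (m + 1)) := by
            rw [hS', Finset.mul_sum]
        _ = ∑ m ∈ Finset.range (n + 1),
              (a * (a ^ m / m.factorial * c m)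
                - n * (a ^ (m + 1) / (m + 1).factorial * c (m + 1))) :=
            Finset.sum_congr rfl fun m _ => key m
        _ = a * T - n * (T - c 0) := by
            rw [Finset.sum_sub_distrib, ← Finset.mul_sum, ← Finset.mul_sum, hU, hT]
        _ = (a - n) * T + n * c 0 := by ring
        _ = (a - n) * T := by rw [hnc, add_zero]
    have hfacn : ((n + 1).factorial : ℝ) = ((n : ℝ) + 1) * n.factorial := by
      rw [Nat.factorial_succ]; push_cast; ring
    calc ((n + 1).factorial : ℝ) * S = (n.factorial : ℝ) * (((n : ℝ) + 1) * S) := by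
          rw [hfacn]; ring
      _ = (n.factorial : ℝ) * ((a - n) * T) := by rw [step]
      _ = (a - n) * ((n.factorial : ℝ) * T) := by ring
      _ = (a - n) * ∏ i ∈ Finset.range n, (a - i) := by rw [ih]
      _ = ∏ i ∈ Finset.range (n + 1), (a - i) := by rw [Finset.prod_range_succ]; ring

lemma coeff_Q (a : ℝ) (m : ℕ) :
    coeff m (psComp (rescale (-a) (exp ℝ)) logSeries)
      = (-1) ^ m * risingFactorial a m / m.factorial := by
  have h := fallingFactorial_eq (-a) m
  have hmf : (m.factorial : ℝ) ≠ 0 := Nat.cast_ne_zero.2 m.factorial_ne_zero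
  have hp : (∏ i ∈ Finset.range m, (-a - (i : ℝ)))
      = (-1) ^ m * risingFactorial a m := by
    rw [risingFactorial]
    calc (∏ i ∈ Finset.range m, (-a - (i : ℝ)))
        = ∏ i ∈ Finset.range m, ((-1) * (a + (i : ℝ))) :=
          Finset.prod_congr rfl fun i _ => by ring
      _ = (-1) ^ m * ∏ i ∈ Finset.range m, (a + (i : ℝ)) := by
          rw [Finset.prod_mul_distrib, Finset.prod_const, Finset.card_range]
  field_simp at h ⊢
  rw [← hp, mul_comm] at *
  linarith [h]

end Aux

/-- Sheffer-type addition formula for the poly-Cauchy polynomials. -/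
theorem polyCauchy_add (k : ℤ) (n : ℕ) (x y : ℝ) :
    polyCauchy k n (x + y) =
      ∑ j ∈ Finset.range (n + 1),
        (-1 : ℝ) ^ (n - j) * (n.choose j : ℝ) * polyCauchy k j x *
          risingFactorial y (n - j) := by
  have hsplit : PowerSeries.rescale (-(x + y)) (PowerSeries.exp ℝ)
      = PowerSeries.rescale (-x) (PowerSeries.exp ℝ) *
        PowerSeries.rescale (-y) (PowerSeries.exp ℝ) := by
    rw [PowerSeries.exp_mul_exp_eq_exp_add (-x) (-y)]
    ring_nf
  have hcomp : psComp (PowerSeries.rescale (-(x + y)) (PowerSeries.exp ℝ)) logSeries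
      = psComp (PowerSeries.rescale (-x) (PowerSeries.exp ℝ)) logSeries *
        psComp (PowerSeries.rescale (-y) (PowerSeries.exp ℝ)) logSeries := by
    rw [hsplit, Aux.psComp_mul]
  simp only [polyCauchy]
  rw [hcomp, ← mul_assoc, PowerSeries.coeff_mul,
    Finset.Nat.sum_antidiagonal_eq_sum_range_succ_mk, Finset.mul_sum]
  refine Finset.sum_congr rfl fun j hj => ?_
  have hjn : j ≤ n := Nat.lt_succ_iff.1 (Finset.mem_range.1 hj)
  rw [Aux.coeff_Q y (n - j)]
  have hfact : (n.factorial : ℝ) = (n.choose j : ℝ) * j.factorial * (n - j).factorial := by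
    rw [← Nat.choose_mul_factorial_mul_factorial hjn]
    push_cast
    ring
  have h1 : ((n - j).factorial : ℝ) ≠ 0 := Nat.cast_ne_zero.2 (Nat.factorial_ne_zero _)
  rw [hfact]
  field_simp
end

section
/- For every integer k and every integer n ≥ 0, the poly-Cauchy polynomials of the first kind satisfy the recurrence C_{n+1}^(k)(x) = Σ_{l=0}^{n} S₁(n,l) Σ_{j=0}^{l} ( (-1)^j C(l,j) / (l-j+2)^k ) (x+1)^j − x · C_n^(k)(x+1). -/
open PowerSeries Finset

-- basic lemmas
set_option linter.deprecated false in
lemma coeff_derivativeFun' (f : PowerSeries ℝ) (n : ℕ) :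
    PowerSeries.coeff n (PowerSeries.derivativeFun f) = PowerSeries.coeff (n + 1) f * (n + 1) :=
  PowerSeries.coeff_derivative f n

lemma coeff_psComp (F G : PowerSeries ℝ) (n : ℕ) :
    PowerSeries.coeff n (psComp F G) =
      ∑ m ∈ Finset.range (n + 1), (PowerSeries.coeff m F) * (PowerSeries.coeff n (G ^ m)) := by
  simp [psComp]

lemma X_dvd_log : (PowerSeries.X : PowerSeries ℝ) ∣ logSeries := by
  rw [PowerSeries.X_dvd_iff]
  simp [logSeries]

lemma coeff_logpow_vanish {a m : ℕ} (h : a < m) :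
    PowerSeries.coeff a (logSeries ^ m) = 0 := by
  have h1 : (PowerSeries.X : PowerSeries ℝ) ^ m ∣ logSeries ^ m := pow_dvd_pow_of_dvd X_dvd_log m
  exact (PowerSeries.X_pow_dvd_iff.mp h1) a h

lemma coeff_zero_psComp (F : PowerSeries ℝ) :
    PowerSeries.coeff 0 (psComp F logSeries) = PowerSeries.coeff 0 F := by
  simp [coeff_psComp]

-- derivative of logSeries
lemma coeff_D_log (n : ℕ) :
    PowerSeries.coeff n (PowerSeries.derivativeFun logSeries) = (-1) ^ n := by
  rw [coeff_derivativeFun']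
  simp only [logSeries, PowerSeries.coeff_mk, Nat.succ_ne_zero, if_false]
  have : ((n:ℝ)+1) ≠ 0 := by positivity
  field_simp
  push_cast
  ring

lemma one_add_X_mul_D_log :
    (1 + PowerSeries.X) * PowerSeries.derivativeFun logSeries = 1 := by
  ext n
  rw [add_mul, one_mul, map_add]
  cases n with
  | zero => simp [coeff_D_log]
  | succ m =>
    rw [PowerSeries.coeff_succ_X_mul, coeff_D_log, coeff_D_log]
    simp [pow_succ]

lemma D_log_pow (m : ℕ) :
    PowerSeries.derivativeFun (logSeries ^ (m+1)) =
      PowerSeries.C ((m:ℝ)+1) * (logSeries ^ m * PowerSeries.derivativeFun logSeries) := by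
  have h := Derivation.leibniz_pow (PowerSeries.derivative ℝ) (a := logSeries) (m+1)
  simp only [smul_eq_mul, nsmul_eq_mul, Nat.add_sub_cancel] at h
  have hc : (PowerSeries.C ((m:ℝ)+1)) = ((m+1 : ℕ) : PowerSeries ℝ) := by
    push_cast [map_natCast]
    simp
  rw [hc]
  exact h

lemma D_psComp (F : PowerSeries ℝ) :
    PowerSeries.derivativeFun (psComp F logSeries) =
      psComp (PowerSeries.derivativeFun F) logSeries * PowerSeries.derivativeFun logSeries := by
  ext n
  rw [coeff_derivativeFun', coeff_psComp, PowerSeries.coeff_mul]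
  have hext : ∀ p ∈ Finset.HasAntidiagonal.antidiagonal n,
      PowerSeries.coeff p.1 (psComp (PowerSeries.derivativeFun F) logSeries) *
        PowerSeries.coeff p.2 (PowerSeries.derivativeFun logSeries)
      = ∑ m ∈ Finset.range (n + 1),
          (PowerSeries.coeff m (PowerSeries.derivativeFun F)) *
            (PowerSeries.coeff p.1 (logSeries ^ m) *
              PowerSeries.coeff p.2 (PowerSeries.derivativeFun logSeries)) := by
    intro p hp
    have hp1 : p.1 ≤ n := Finset.HasAntidiagonal.antidiagonal.fst_le hp
    rw [coeff_psComp, Finset.sum_mul]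
    rw [Finset.sum_subset (Finset.range_subset_range.mpr (by omega : p.1 + 1 ≤ n + 1))]
    · exact Finset.sum_congr rfl fun m _ => by ring
    · intro m _ hm
      have : p.1 < m := by simp at hm; omega
      rw [coeff_logpow_vanish this, mul_zero, zero_mul]
  rw [Finset.sum_congr rfl hext, Finset.sum_comm]
  have hinner : ∀ m ∈ Finset.range (n+1),
      (∑ p ∈ Finset.HasAntidiagonal.antidiagonal n,
        (PowerSeries.coeff m (PowerSeries.derivativeFun F)) *
          (PowerSeries.coeff p.1 (logSeries ^ m) *
            PowerSeries.coeff p.2 (PowerSeries.derivativeFun logSeries)))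
      = PowerSeries.coeff (m+1) F *
          (PowerSeries.coeff (n+1) (logSeries ^ (m+1)) * ((n:ℝ)+1)) := by
    intro m _
    rw [← Finset.mul_sum, ← PowerSeries.coeff_mul, coeff_derivativeFun']
    have h2 : PowerSeries.coeff (n+1) (logSeries ^ (m+1)) * ((n:ℝ)+1)
        = PowerSeries.coeff n (PowerSeries.derivativeFun (logSeries ^ (m+1))) := by
      rw [coeff_derivativeFun']
      
    rw [h2, D_log_pow, PowerSeries.coeff_C_mul]
    push_cast
    ring
  rw [Finset.sum_congr rfl hinner]
  rw [Finset.sum_range_succ' (fun m => PowerSeries.coeff m F *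
        PowerSeries.coeff (n+1) (logSeries ^ m)) (n+1)]
  have h0 : PowerSeries.coeff 0 F * PowerSeries.coeff (n+1) ((logSeries : PowerSeries ℝ) ^ 0) = 0 := by
    simp
  rw [h0, add_zero, Finset.sum_mul]
  apply Finset.sum_congr rfl
  intro m _
  push_cast
  ring

/-- the derivative of `Lif k`. -/
noncomputable def LifD (k : ℤ) : PowerSeries ℝ :=
  PowerSeries.mk fun m => 1 / ((m.factorial : ℝ) * ((m : ℝ) + 2) ^ k)

lemma D_Lif (k : ℤ) : PowerSeries.derivativeFun (Lif k) = LifD k := by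
  ext n
  rw [coeff_derivativeFun']
  simp only [Lif, LifD, PowerSeries.coeff_mk]
  have h1 : ((n+1).factorial : ℝ) = (n.factorial : ℝ) * ((n:ℝ)+1) := by
    rw [Nat.factorial_succ]; push_cast; ring
  have h2 : ((n:ℝ)+1+1 : ℝ) = ((n:ℝ)+2) := by ring
  rw [h1]
  push_cast [h2]
  have hf : (n.factorial : ℝ) ≠ 0 := Nat.cast_ne_zero.mpr n.factorial_ne_zero
  have hn : ((n:ℝ)+1) ≠ 0 := by positivity
  have hk : (((n:ℝ)+2) : ℝ) ^ k ≠ 0 := by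
    apply zpow_ne_zero; positivity
  field_simp

lemma D_rescale_exp (y : ℝ) :
    PowerSeries.derivativeFun (PowerSeries.rescale y (PowerSeries.exp ℝ)) =
      PowerSeries.C y * PowerSeries.rescale y (PowerSeries.exp ℝ) := by
  ext n
  rw [coeff_derivativeFun', PowerSeries.coeff_C_mul]
  simp only [PowerSeries.coeff_rescale, PowerSeries.coeff_exp]
  have h1 : (algebraMap ℚ ℝ) (1 / ((n+1).factorial : ℚ)) = 1 / (((n+1).factorial : ℝ)) := by
    simp
  have h2 : (algebraMap ℚ ℝ) (1 / (n.factorial : ℚ)) = 1 / ((n.factorial : ℝ)) := by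
    simp
  rw [h1, h2]
  have h3 : ((n+1).factorial : ℝ) = (n.factorial : ℝ) * ((n:ℝ)+1) := by
    rw [Nat.factorial_succ]; push_cast; ring
  have hf : (n.factorial : ℝ) ≠ 0 := Nat.cast_ne_zero.mpr n.factorial_ne_zero
  have hn : ((n:ℝ)+1) ≠ 0 := by positivity
  rw [h3, pow_succ]
  field_simp

lemma psComp_C_mul (c : ℝ) (F : PowerSeries ℝ) :
    psComp (PowerSeries.C c * F) logSeries = PowerSeries.C c * psComp F logSeries := by
  ext n
  rw [PowerSeries.coeff_C_mul, coeff_psComp, coeff_psComp, Finset.mul_sum]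
  exact Finset.sum_congr rfl fun m _ => by rw [PowerSeries.coeff_C_mul]; ring

/-- uniqueness for the ODE `(1+X) f' = c f`. -/
lemma ode_unique (c : ℝ) (f g : PowerSeries ℝ)
    (hf : (1 + PowerSeries.X) * PowerSeries.derivativeFun f = PowerSeries.C c * f)
    (hg : (1 + PowerSeries.X) * PowerSeries.derivativeFun g = PowerSeries.C c * g)
    (h0 : PowerSeries.coeff 0 f = PowerSeries.coeff 0 g) : f = g := by
  have key : ∀ h : PowerSeries ℝ,
      (1 + PowerSeries.X) * PowerSeries.derivativeFun h = PowerSeries.C c * h →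
      ∀ n : ℕ, PowerSeries.coeff (n+1) h * ((n:ℝ)+1) + PowerSeries.coeff n h * n
        = c * PowerSeries.coeff n h := by
    intro h hh n
    have := congrArg (PowerSeries.coeff n) hh
    rw [add_mul, one_mul, map_add, coeff_derivativeFun', PowerSeries.coeff_C_mul]
      at this
    cases n with
    | zero => simpa using this
    | succ m =>
      rw [PowerSeries.coeff_succ_X_mul, coeff_derivativeFun'] at this
      push_cast at this ⊢
      linarith [this]
  ext n
  induction n using Nat.strong_induction_on with
  | _ n ih =>
    cases n with
    | zero => exact h0
    | succ m =>
      have hm := ih m (Nat.lt_succ_self m)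
      have e1 := key f hf m
      have e2 := key g hg m
      rw [hm] at e1
      have hpos : ((m:ℝ)+1) ≠ 0 := by positivity
      have := e1.trans e2.symm
      field_simp at this
      exact mul_right_cancel₀ hpos (by linear_combination this)

/-- abbreviation for the composed exponential series. -/
noncomputable def Eser (y : ℝ) : PowerSeries ℝ :=
  psComp (PowerSeries.rescale y (PowerSeries.exp ℝ)) logSeries

lemma ode_E (y : ℝ) :
    (1 + PowerSeries.X) * PowerSeries.derivativeFun (Eser y) =
      PowerSeries.C y * Eser y := by
  rw [Eser, D_psComp, D_rescale_exp, psComp_C_mul]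
  have h := one_add_X_mul_D_log
  linear_combination (PowerSeries.C y * psComp (PowerSeries.rescale y (PowerSeries.exp ℝ)) logSeries) * h

lemma coeff0_E (y : ℝ) : PowerSeries.coeff 0 (Eser y) = 1 := by
  rw [Eser, coeff_zero_psComp]
  simp [PowerSeries.coeff_rescale, PowerSeries.coeff_exp]

lemma D_one_add_X :
    PowerSeries.derivativeFun ((1 : PowerSeries ℝ) + PowerSeries.X) = 1 := by
  rw [PowerSeries.derivativeFun_add, PowerSeries.derivativeFun_one]
  have : PowerSeries.derivativeFun (PowerSeries.X : PowerSeries ℝ) = 1 :=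
    PowerSeries.derivative_X
  rw [this, zero_add]

lemma E_shift (y : ℝ) :
    (1 + PowerSeries.X) * Eser y = Eser (y + 1) := by
  apply ode_unique (y + 1)
  · rw [PowerSeries.derivativeFun_mul, D_one_add_X]
    simp only [smul_eq_mul]
    have h := ode_E y
    rw [map_add, map_one]
    linear_combination (1 + PowerSeries.X) * h
  · exact ode_E (y + 1)
  · rw [PowerSeries.coeff_mul]
    simp [coeff0_E]

lemma triangle_sum_s8 (n : ℕ) (w : ℕ → ℕ → ℝ) (hw : ∀ i j, n < i + j → w i j = 0) :
    ∑ i ∈ Finset.range (n+1), ∑ j ∈ Finset.range (n+1), w i j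
      = ∑ l ∈ Finset.range (n+1), ∑ j ∈ Finset.range (l+1), w (l-j) j := by
  have hstep : ∀ l : ℕ, ∑ j ∈ Finset.range (l+1), w (l-j) j
      = ∑ p ∈ Finset.HasAntidiagonal.antidiagonal l, w p.1 p.2 := by
    intro l
    rw [← Finset.Nat.sum_antidiagonal_swap (f := fun p => w p.1 p.2)]
    simp only [Prod.fst_swap, Prod.snd_swap]
    exact (Finset.Nat.sum_antidiagonal_eq_sum_range_succ (fun a b => w b a) l).symm
  simp_rw [hstep]
  have hdisj : (↑(Finset.range (n+1)) : Set ℕ).PairwiseDisjoint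
      (fun l => Finset.HasAntidiagonal.antidiagonal l) := by
    intro a _ b _ hab
    simp only [Finset.disjoint_left]
    intro p hpa hpb
    rw [Finset.HasAntidiagonal.mem_antidiagonal] at hpa hpb
    exact hab (hpa ▸ hpb ▸ rfl)
  rw [← Finset.sum_biUnion hdisj]
  rw [← Finset.sum_product']
  symm
  apply Finset.sum_subset
  · intro p hp
    simp only [Finset.mem_biUnion] at hp
    obtain ⟨l, hl, hpl⟩ := hp
    rw [Finset.HasAntidiagonal.mem_antidiagonal] at hpl
    rw [Finset.mem_range] at hl
    simp only [Finset.mem_product, Finset.mem_range]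
    omega
  · intro p hp hnp
    apply hw
    simp only [Finset.mem_product, Finset.mem_range] at hp
    by_contra hle
    apply hnp
    simp only [Finset.mem_biUnion]
    exact ⟨p.1 + p.2, Finset.mem_range.mpr (by omega), Finset.HasAntidiagonal.mem_antidiagonal.mpr rfl⟩

lemma coeff_psComp_mul (A B : PowerSeries ℝ) (n : ℕ) :
    PowerSeries.coeff n (psComp A logSeries * psComp B logSeries)
      = ∑ i ∈ Finset.range (n+1), ∑ j ∈ Finset.range (n+1),
          PowerSeries.coeff i A * PowerSeries.coeff j B *
            PowerSeries.coeff n (logSeries ^ (i+j)) := by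
  rw [PowerSeries.coeff_mul]
  have hA : ∀ p ∈ Finset.HasAntidiagonal.antidiagonal n,
      PowerSeries.coeff p.1 (psComp A logSeries) * PowerSeries.coeff p.2 (psComp B logSeries)
      = ∑ i ∈ Finset.range (n+1), ∑ j ∈ Finset.range (n+1),
          (PowerSeries.coeff i A * PowerSeries.coeff p.1 (logSeries ^ i)) *
            (PowerSeries.coeff j B * PowerSeries.coeff p.2 (logSeries ^ j)) := by
    intro p hp
    have hp1 : p.1 ≤ n := Finset.HasAntidiagonal.antidiagonal.fst_le hp
    have hp2 : p.2 ≤ n := Finset.HasAntidiagonal.antidiagonal.snd_le hp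
    rw [coeff_psComp, coeff_psComp]
    rw [Finset.sum_subset (Finset.range_subset_range.mpr (by omega : p.1 + 1 ≤ n + 1))
        (fun m _ hm => by
          have : p.1 < m := by simp at hm; omega
          rw [coeff_logpow_vanish this, mul_zero]),
      Finset.sum_subset (Finset.range_subset_range.mpr (by omega : p.2 + 1 ≤ n + 1))
        (fun m _ hm => by
          have : p.2 < m := by simp at hm; omega
          rw [coeff_logpow_vanish this, mul_zero])]
    rw [Finset.sum_mul_sum]
  rw [Finset.sum_congr rfl hA, Finset.sum_comm]
  apply Finset.sum_congr rfl
  intro i _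
  rw [Finset.sum_comm]
  apply Finset.sum_congr rfl
  intro j _
  have : ∑ p ∈ Finset.HasAntidiagonal.antidiagonal n,
      (PowerSeries.coeff i A * PowerSeries.coeff p.1 (logSeries ^ i)) *
        (PowerSeries.coeff j B * PowerSeries.coeff p.2 (logSeries ^ j))
      = PowerSeries.coeff i A * PowerSeries.coeff j B *
          ∑ p ∈ Finset.HasAntidiagonal.antidiagonal n,
            PowerSeries.coeff p.1 (logSeries ^ i) * PowerSeries.coeff p.2 (logSeries ^ j) := by
    rw [Finset.mul_sum]
    exact Finset.sum_congr rfl fun p _ => by ring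
  rw [this, ← PowerSeries.coeff_mul, ← pow_add]

lemma term1 (k : ℤ) (n : ℕ) (x : ℝ) :
    (n.factorial : ℝ) * PowerSeries.coeff n (psComp (LifD k) logSeries * Eser (-(x+1)))
      = ∑ l ∈ Finset.range (n+1), S1 n l * ∑ j ∈ Finset.range (l+1),
          ((-1:ℝ)^j * (l.choose j : ℝ) / ((l:ℝ) - j + 2)^k) * (x+1)^j := by
  rw [Eser, coeff_psComp_mul]
  rw [triangle_sum_s8 n _ (fun i j h => by
    rw [coeff_logpow_vanish h, mul_zero])]
  rw [Finset.mul_sum]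
  apply Finset.sum_congr rfl
  intro l hl
  rw [Finset.mul_sum, Finset.mul_sum]
  apply Finset.sum_congr rfl
  intro j hj
  have hjl : j ≤ l := by simpa using Nat.lt_succ_iff.mp (Finset.mem_range.mp hj)
  have hsub : l - j + j = l := by omega
  rw [hsub]
  simp only [LifD, PowerSeries.coeff_mk, PowerSeries.coeff_rescale, PowerSeries.coeff_exp, S1]
  have hcast : ((l:ℝ) - (j:ℝ) + 2) = (((l-j : ℕ):ℝ) + 2) := by
    push_cast [Nat.cast_sub hjl]; ring
  have hC : (l.choose j : ℝ) * (j.factorial : ℝ) * ((l-j).factorial : ℝ) = (l.factorial : ℝ) := by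
    exact_mod_cast congrArg (Nat.cast : ℕ → ℝ) (Nat.choose_mul_factorial_mul_factorial hjl)
  have hneg : (-(x+1))^j = (-1:ℝ)^j * (x+1)^j := by
    rw [neg_pow]
  have halg : (algebraMap ℚ ℝ) (1 / (j.factorial : ℚ)) = 1 / ((j.factorial : ℝ)) := by simp
  have hc0 : (((l-j : ℕ):ℝ) + 2) ≠ 0 := by positivity
  have hck : (((l-j : ℕ):ℝ) + 2) ^ k ≠ 0 := zpow_ne_zero _ hc0
  have hf1 : ((l-j).factorial : ℝ) ≠ 0 := Nat.cast_ne_zero.mpr (Nat.factorial_ne_zero _)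
  have hf2 : (j.factorial : ℝ) ≠ 0 := Nat.cast_ne_zero.mpr (Nat.factorial_ne_zero _)
  have hf3 : (l.factorial : ℝ) ≠ 0 := Nat.cast_ne_zero.mpr (Nat.factorial_ne_zero _)
  rw [hcast, hneg, halg]
  set z : ℝ := (((l-j : ℕ):ℝ) + 2) ^ k with hzdef
  have hz : z ≠ 0 := hck
  field_simp
  linear_combination (-(PowerSeries.coeff n (logSeries ^ l)) * (x+1)^j) * hC

/-- Theorem 3 of the paper. -/
theorem polyCauchy_recurrence (k : ℤ) (n : ℕ) (x : ℝ) :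
    polyCauchy k (n + 1) x =
      (∑ l ∈ Finset.range (n + 1), S1 n l *
        ∑ j ∈ Finset.range (l + 1),
          ((-1 : ℝ) ^ j * (l.choose j : ℝ) / ((l : ℝ) - j + 2) ^ k) * (x + 1) ^ j) -
      x * polyCauchy k n (x + 1) := by

  have hne : (1 + PowerSeries.X : PowerSeries ℝ) ≠ 0 := by
    intro h
    have := congrArg (PowerSeries.coeff 0) h
    simp at this
  have h1 : (1 + PowerSeries.X) * PowerSeries.derivativeFun (psComp (Lif k) logSeries)
      = psComp (LifD k) logSeries := by
    rw [D_psComp, D_Lif]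
    linear_combination (psComp (LifD k) logSeries) * one_add_X_mul_D_log
  have hE : (1 + PowerSeries.X) * Eser (-(x+1)) = Eser (-x) := by
    rw [E_shift]
    congr 1
    ring
  have main : PowerSeries.derivativeFun (psComp (Lif k) logSeries * Eser (-x))
      = psComp (LifD k) logSeries * Eser (-(x+1)) +
          PowerSeries.C (-x) * (psComp (Lif k) logSeries * Eser (-(x+1))) := by
    apply mul_left_cancel₀ hne
    rw [PowerSeries.derivativeFun_mul]
    simp only [smul_eq_mul]
    linear_combination (psComp (Lif k) logSeries) * ode_E (-x) + Eser (-x) * h1 -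
      (psComp (LifD k) logSeries + PowerSeries.C (-x) * psComp (Lif k) logSeries) * hE
  have hD := congrArg (PowerSeries.coeff n) main
  rw [coeff_derivativeFun', map_add, PowerSeries.coeff_C_mul] at hD
  have t1 := term1 k n x
  have hEdef : ∀ y : ℝ, psComp (PowerSeries.rescale y (PowerSeries.exp ℝ)) logSeries = Eser y :=
    fun _ => rfl
  unfold polyCauchy
  rw [hEdef, hEdef]
  push_cast [Nat.factorial_succ]
  linear_combination (n.factorial : ℝ) * hD + t1
end
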